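/- arXiv:2312.03573 — 3 statements merged into one kernel-verified Lean document; each statement's English description precedes it below -/
import Mathlib

section
/- Let Ξ ⊆ ℝ^p be nonempty, convex and closed, let ξ^{(1)},…,ξ^{(K)} ∈ Ξ with empirical distribution P̂_K = (1/K) Σ_{k=1}^K δ_{ξ^{(k)}}, and let ε ≥ 0. Let h : Ξ → ℝ satisfy h(ξ) = max_{ℓ=1,…,L} h_ℓ(ξ), where each −h_ℓ is a convex, proper, lower semicontinuous function on Ξ and each h_ℓ is not identically −∞ on Ξ. Then the worst-case expectation over the Wasserstein ambiguity set equals its dual: sup_{Q ∈ B_ε(P̂_K)} ∫_Ξ h(ξ) dQ(ξ) = inf_{λ ≥ 0} [ λ·ε + (1/K) Σ_{k=1}^K sup_{ξ ∈ Ξ} ( h(ξ) − λ·‖ξ − ξ^{(k)}‖ ) ], with both sides taking values in ℝ ∪ {+∞}. Consequently, for a game in which agent i minimizes x_i ↦ sup_{Q ∈ B_{ε_i}(P̂_{K_i})} E_Q[h_i(x_i, x_{-i}, ξ_i)] over X_i with h_i(x, ·) of the above form for each x, one has inf_{x_i ∈ X_i} sup_{Q ∈ B_{ε_i}(P̂_{K_i})}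 E_Q[h_i(x_i, x_{-i}, ξ_i)] = inf_{x_i ∈ X_i, λ_i ≥ 0} [ λ_i ε_i + (1/K_i) Σ_{k=1}^{K_i} sup_{ξ_i ∈ Ξ_i} ( h_i(x_i, x_{-i}, ξ_i) − λ_i ‖ξ_i − ξ_i^{(k)}‖ ) ]. -/
open MeasureTheory

/-- The order-1 Wasserstein distance between two measures, defined as the infimum over
couplings of the expected distance. -/
noncomputable def wassersteinDist {E : Type*} [MeasurableSpace E] [PseudoEMetricSpace E]
    (μ ν : Measure E) : ℝ :=
  (⨅ (γ : Measure (E × E)) (_ : γ.map Prod.fst = μ) (_ : γ.map Prod.snd = ν),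
    ∫⁻ z, edist z.1 z.2 ∂γ).toReal

/-- The empirical distribution of `K` samples. -/
noncomputable def empiricalMeasure {E : Type*} [MeasurableSpace E] {K : ℕ}
    (ξs : Fin K → E) : Measure E :=
  (K : ENNReal)⁻¹ • ∑ k : Fin K, Measure.dirac (ξs k)

/-- The Wasserstein ambiguity set of radius `ε` around the empirical distribution. -/
noncomputable def ambiguitySet {p : ℕ} (Ξ : Set (EuclideanSpace ℝ (Fin p))) {K : ℕ}
    (ξs : Fin K → EuclideanSpace ℝ (Fin p)) (ε : ℝ) :
    Set (Measure (EuclideanSpace ℝ (Fin p))) :=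
  {Q | IsProbabilityMeasure Q ∧ Q Ξᶜ = 0 ∧ Integrable (fun x => ‖x‖) Q ∧
       wassersteinDist (empiricalMeasure ξs) Q ≤ ε}

/-- Worst-case expectation of `h` over the Wasserstein ambiguity set, with values in
`ℝ ∪ {±∞}` (it equals `−∞` if no distribution in the set gives a well-defined finite
expectation). -/
noncomputable def drWorst {p : ℕ} (Ξ : Set (EuclideanSpace ℝ (Fin p))) {K : ℕ}
    (ξs : Fin K → EuclideanSpace ℝ (Fin p)) (ε : ℝ)
    (h : EuclideanSpace ℝ (Fin p) → ℝ) : EReal :=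
  sSup {r : EReal | ∃ Q ∈ ambiguitySet Ξ ξs ε, Integrable h Q ∧
    r = ((∫ ξ, h ξ ∂Q : ℝ) : EReal)}

/-- The dual objective `λ·ε + (1/K) Σ_k sup_{ξ ∈ Ξ} ( h(ξ) − λ‖ξ − ξ^{(k)}‖ )`,
with values in `ℝ ∪ {+∞}`. -/
noncomputable def drDualBody {p : ℕ} (Ξ : Set (EuclideanSpace ℝ (Fin p))) {K : ℕ}
    (ξs : Fin K → EuclideanSpace ℝ (Fin p)) (ε lam : ℝ)
    (h : EuclideanSpace ℝ (Fin p) → ℝ) : EReal :=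
  ((lam * ε : ℝ) : EReal) + (((K : ℝ)⁻¹ : ℝ) : EReal) *
    ∑ k : Fin K, sSup {s : EReal | ∃ ξ ∈ Ξ, s = ((h ξ - lam * ‖ξ - ξs k‖ : ℝ) : EReal)}

/-- `h` is the pointwise maximum of `L` functions `hl ℓ` on `Ξ`, each of which is
concave (`−hl ℓ` convex) and upper semicontinuous (`−hl ℓ` lower semicontinuous) on `Ξ`. -/
def IsPointwiseMaxOfConcave {p L : ℕ} (Ξ : Set (EuclideanSpace ℝ (Fin p)))
    (h : EuclideanSpace ℝ (Fin p) → ℝ)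
    (hl : Fin L → EuclideanSpace ℝ (Fin p) → ℝ) : Prop :=
  (∀ ξ ∈ Ξ, h ξ = ⨆ ℓ : Fin L, hl ℓ ξ) ∧
    (∀ ℓ, ConvexOn ℝ Ξ fun ξ => -(hl ℓ ξ)) ∧
    (∀ ℓ, LowerSemicontinuousOn (fun ξ => -(hl ℓ ξ)) Ξ)


section AUX1

lemma ereal_coe_fsum {ι : Type*} (s : Finset ι) (f : ι → ℝ) :
    ((∑ i ∈ s, f i : ℝ) : EReal) = ∑ i ∈ s, (f i : EReal) := by
  induction s using Finset.cons_induction with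
  | empty => simp
  | cons a s ha ih => rw [Finset.sum_cons, Finset.sum_cons, EReal.coe_add, ih]

lemma ereal_fsum_ne_bot {ι : Type*} {s : Finset ι} {f : ι → EReal}
    (hf : ∀ i ∈ s, f i ≠ ⊥) : ∑ i ∈ s, f i ≠ ⊥ := by
  induction s using Finset.cons_induction with
  | empty => simp
  | cons a s ha ih =>
    rw [Finset.sum_cons, Ne, EReal.add_eq_bot_iff]
    push_neg
    exact ⟨hf a (Finset.mem_cons_self a s), ih fun i hi => hf i (Finset.mem_cons_of_mem hi)⟩

lemma ereal_fsum_eq_top {ι : Type*} {s : Finset ι} {f : ι → EReal} {a : ι} (has : a ∈ s)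
    (htop : f a = ⊤) (hf : ∀ i ∈ s, f i ≠ ⊥) : ∑ i ∈ s, f i = ⊤ := by
  classical
  rw [← Finset.add_sum_erase s f has, htop]
  exact EReal.top_add_of_ne_bot (ereal_fsum_ne_bot fun i hi => hf i (Finset.mem_of_mem_erase hi))

lemma measurable_of_const_off_finite {α β : Type*} [MeasurableSpace α]
    [MeasurableSingletonClass α] [MeasurableSpace β] {f : α → β} {s : Set α} (hs : s.Finite)
    (c : β) (hf : ∀ x ∉ s, f x = c) : Measurable f := by
  intro t _
  by_cases hc : c ∈ t
  · have : f ⁻¹' t = (s ∩ f ⁻¹' t) ∪ sᶜ := by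
      ext x
      by_cases hx : x ∈ s
      · simp [hx]
      · simp [hx, hf x hx, hc]
    rw [this]
    exact ((hs.inter_of_left _).measurableSet).union hs.measurableSet.compl
  · have : f ⁻¹' t = s ∩ f ⁻¹' t := by
      ext x
      by_cases hx : x ∈ s
      · simp [hx]
      · simp [hx, hf x hx, hc]
    rw [this]
    exact (hs.inter_of_left _).measurableSet

lemma integrable_dirac' {α : Type*} [MeasurableSpace α] [MeasurableSingletonClass α]
    {G : Type*} [NormedAddCommGroup G] (f : α → G) (a : α) :
    Integrable f (Measure.dirac a) := by
  have : f =ᵐ[Measure.dirac a] fun _ => f a := by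
    rw [Filter.EventuallyEq, ae_dirac_eq]
    exact Filter.eventually_pure.2 rfl
  exact (integrable_const (f a)).congr this.symm

lemma map_fsum {α β : Type*} [MeasurableSpace α] [MeasurableSpace β] {ι : Type*}
    (s : Finset ι) (μ : ι → Measure α) {f : α → β} (hf : Measurable f) :
    Measure.map f (∑ i ∈ s, μ i) = ∑ i ∈ s, Measure.map f (μ i) := by
  induction s using Finset.cons_induction with
  | empty => simp
  | cons a s ha ih => rw [Finset.sum_cons, Finset.sum_cons, Measure.map_add _ _ hf, ih]

end AUX1
section Mix
variable {α : Type*} [MeasurableSpace α] [MeasurableSingletonClass α]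
variable {ι : Type*} [Fintype ι]

noncomputable def mixM [MeasurableSingletonClass α] (w : ι → ℝ) (z : ι → α) : Measure α :=
  ∑ j : ι, ENNReal.ofReal (w j) • Measure.dirac (z j)

lemma integrable_mixM (w : ι → ℝ) (z : ι → α) {G : Type*} [NormedAddCommGroup G] (f : α → G) :
    Integrable f (mixM w z) :=
  integrable_finset_sum_measure.2 fun j _ =>
    (integrable_dirac' f (z j)).smul_measure ENNReal.ofReal_ne_top

lemma integral_mixM (w : ι → ℝ) (z : ι → α) (hw : ∀ j, 0 ≤ w j) (f : α → ℝ) :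
    ∫ x, f x ∂(mixM w z) = ∑ j, w j * f (z j) := by
  rw [mixM, integral_finset_sum_measure fun j _ =>
    (integrable_dirac' f (z j)).smul_measure ENNReal.ofReal_ne_top]
  refine Finset.sum_congr rfl fun j _ => ?_
  rw [integral_smul_measure, integral_dirac, ENNReal.toReal_ofReal (hw j), smul_eq_mul]

lemma mixM_apply (w : ι → ℝ) (z : ι → α) (s : Set α) (hs : MeasurableSet s) :
    mixM w z s = ∑ j, ENNReal.ofReal (w j) * (s.indicator 1 (z j)) := by
  rw [mixM, Measure.finset_sum_apply]
  refine Finset.sum_congr rfl fun j _ => ?_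
  rw [Measure.smul_apply, Measure.dirac_apply' _ hs, smul_eq_mul]

lemma mixM_univ (w : ι → ℝ) (z : ι → α) (hw1 : ∑ j, w j = 1) (hw : ∀ j, 0 ≤ w j) :
    mixM w z Set.univ = 1 := by
  rw [mixM_apply w z Set.univ MeasurableSet.univ]
  simp only [Set.indicator_univ, Pi.one_apply, mul_one]
  rw [← ENNReal.ofReal_sum_of_nonneg fun j _ => hw j, hw1, ENNReal.ofReal_one]

lemma mixM_compl_eq_zero (w : ι → ℝ) (z : ι → α) {Ξ : Set α} (hΞ : MeasurableSet Ξ)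
    (hz : ∀ j, z j ∈ Ξ) : mixM w z Ξᶜ = 0 := by
  rw [mixM_apply w z Ξᶜ hΞ.compl]
  refine Finset.sum_eq_zero fun j _ => ?_
  rw [Set.indicator_of_notMem (by simp [hz j]), mul_zero]

end Mix

section Emp
variable {α : Type*} [MeasurableSpace α] [MeasurableSingletonClass α] {K : ℕ}
  (ξs : Fin K → α)

lemma empirical_apply (s : Set α) (hs : MeasurableSet s) :
    empiricalMeasure ξs s = (K : ENNReal)⁻¹ * ∑ k, (s.indicator 1 (ξs k)) := by
  rw [empiricalMeasure, Measure.smul_apply, Measure.finset_sum_apply, smul_eq_mul]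
  congr 1
  exact Finset.sum_congr rfl fun k _ => Measure.dirac_apply' _ hs

lemma empirical_univ (hK : 0 < K) : empiricalMeasure ξs Set.univ = 1 := by
  rw [empirical_apply ξs Set.univ MeasurableSet.univ]
  simp only [Set.indicator_univ, Pi.one_apply, Finset.sum_const, Finset.card_univ,
    Fintype.card_fin, nsmul_eq_mul, mul_one]
  rw [ENNReal.inv_mul_cancel (by exact_mod_cast hK.ne') (ENNReal.natCast_ne_top K)]

lemma empirical_isProb (hK : 0 < K) : IsProbabilityMeasure (empiricalMeasure ξs) :=
  ⟨empirical_univ ξs hK⟩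

lemma empirical_compl_eq_zero {Ξ : Set α} (hΞ : MeasurableSet Ξ) (hz : ∀ k, ξs k ∈ Ξ) :
    empiricalMeasure ξs Ξᶜ = 0 := by
  rw [empirical_apply ξs Ξᶜ hΞ.compl]
  have : ∀ k ∈ Finset.univ, (Ξᶜ).indicator (1 : α → ENNReal) (ξs k) = 0 := fun k _ =>
    Set.indicator_of_notMem (by simp [hz k]) _
  rw [Finset.sum_congr rfl this]
  simp

lemma integrable_empirical (hK : 0 < K) {G : Type*} [NormedAddCommGroup G] (f : α → G) :
    Integrable f (empiricalMeasure ξs) := by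
  rw [empiricalMeasure]
  exact (integrable_finset_sum_measure.2 fun k _ => integrable_dirac' f (ξs k)).smul_measure
    (ENNReal.inv_ne_top.2 (by exact_mod_cast hK.ne'))

lemma integral_empirical (hK : 0 < K) (f : α → ℝ) :
    ∫ x, f x ∂(empiricalMeasure ξs) = (K : ℝ)⁻¹ * ∑ k, f (ξs k) := by
  rw [empiricalMeasure, integral_smul_measure,
    integral_finset_sum_measure fun k _ => integrable_dirac' f (ξs k)]
  simp only [integral_dirac, smul_eq_mul]
  congr 1
  rw [ENNReal.toReal_inv]
  simp

end Emp

set_option linter.unusedSectionVars false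
section Wass
variable {α : Type*} [MeasurableSpace α] [PseudoEMetricSpace α] [OpensMeasurableSpace α]
  [SecondCountableTopology α]

lemma wassersteinDist_le_of_coupling {μ ν : Measure α} (γ : Measure (α × α))
    (h1 : γ.map Prod.fst = μ) (h2 : γ.map Prod.snd = ν) {c : ℝ} (hc0 : 0 ≤ c)
    (hcost : ∫⁻ z, edist z.1 z.2 ∂γ ≤ ENNReal.ofReal c) : wassersteinDist μ ν ≤ c := by
  refine ENNReal.toReal_le_of_le_ofReal hc0 ?_
  exact le_trans (iInf_le_of_le γ (iInf_le_of_le h1 (iInf_le_of_le h2 le_rfl))) hcost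

lemma wassersteinDist_self_le (μ : Measure α) {ε : ℝ} (hε : 0 ≤ ε) :
    wassersteinDist μ μ ≤ ε := by
  have hdiag : Measurable fun x : α => (x, x) := measurable_id.prodMk measurable_id
  refine wassersteinDist_le_of_coupling (μ.map fun x => (x, x)) ?_ ?_ hε ?_
  · rw [Measure.map_map measurable_fst hdiag]
    simp [Function.comp_def]
  · rw [Measure.map_map measurable_snd hdiag]
    simp [Function.comp_def]
  · rw [lintegral_map (measurable_fst.edist measurable_snd) hdiag]
    simp

end Wass

section WassE
variable {Em : Type*} [MeasurableSpace Em] [NormedAddCommGroup Em] [BorelSpace Em]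
  [SecondCountableTopology Em]

lemma lintegral_ofReal_norm_ne_top {ρ : Measure Em} (hρ : Integrable (fun x => ‖x‖) ρ) :
    ∫⁻ x, ENNReal.ofReal ‖x‖ ∂ρ ≠ ⊤ := by
  have := (hasFiniteIntegral_iff_ofReal (Filter.Eventually.of_forall fun x => norm_nonneg x)).1 hρ.2
  exact this.ne

lemma exists_coupling_of_wass_le {μ ν : Measure Em} [IsProbabilityMeasure μ]
    [IsProbabilityMeasure ν] (hμ : Integrable (fun x => ‖x‖) μ)
    (hν : Integrable (fun x => ‖x‖) ν) {ε δ : ℝ} (hε : 0 ≤ ε) (hδ : 0 < δ)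
    (hw : wassersteinDist μ ν ≤ ε) :
    ∃ γ : Measure (Em × Em), γ.map Prod.fst = μ ∧ γ.map Prod.snd = ν ∧
      ∫⁻ z, edist z.1 z.2 ∂γ ≤ ENNReal.ofReal (ε + δ) := by
  set I := ⨅ (γ : Measure (Em × Em)) (_ : γ.map Prod.fst = μ) (_ : γ.map Prod.snd = ν),
    ∫⁻ z, edist z.1 z.2 ∂γ with hIdef
  have hprod : ∫⁻ z, edist z.1 z.2 ∂(μ.prod ν) ≠ ⊤ := by
    have hb : ∀ z : Em × Em, edist z.1 z.2 ≤ ENNReal.ofReal ‖z.1‖ + ENNReal.ofReal ‖z.2‖ := by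
      intro z
      rw [edist_dist, ← ENNReal.ofReal_add (norm_nonneg _) (norm_nonneg _)]
      exact ENNReal.ofReal_le_ofReal ((dist_eq_norm _ _).le.trans (norm_sub_le _ _))
    refine ne_top_of_le_ne_top ?_ (lintegral_mono hb)
    rw [lintegral_add_left (measurable_fst.norm.ennreal_ofReal)]
    have h1 : ∫⁻ z : Em × Em, ENNReal.ofReal ‖z.1‖ ∂(μ.prod ν) = ∫⁻ x, ENNReal.ofReal ‖x‖ ∂μ := by
      rw [← lintegral_map measurable_norm.ennreal_ofReal measurable_fst, Measure.map_fst_prod,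
        measure_univ, one_smul]
    have h2 : ∫⁻ z : Em × Em, ENNReal.ofReal ‖z.2‖ ∂(μ.prod ν) = ∫⁻ x, ENNReal.ofReal ‖x‖ ∂ν := by
      rw [← lintegral_map measurable_norm.ennreal_ofReal measurable_snd, Measure.map_snd_prod,
        measure_univ, one_smul]
    rw [h1, h2]
    exact ENNReal.add_ne_top.2 ⟨lintegral_ofReal_norm_ne_top hμ, lintegral_ofReal_norm_ne_top hν⟩
  have hItop : I ≠ ⊤ := by
    refine ne_top_of_le_ne_top hprod ?_
    refine iInf_le_of_le (μ.prod ν) (iInf_le_of_le ?_ (iInf_le_of_le ?_ le_rfl))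
    · rw [Measure.map_fst_prod, measure_univ, one_smul]
    · rw [Measure.map_snd_prod, measure_univ, one_smul]
  have hI : I ≤ ENNReal.ofReal ε := (ENNReal.le_ofReal_iff_toReal_le hItop hε).2 hw
  have hlt : I < ENNReal.ofReal (ε + δ) :=
    lt_of_le_of_lt hI (ENNReal.ofReal_lt_ofReal_iff (by linarith)|>.2 (by linarith))
  rw [hIdef, iInf_lt_iff] at hlt
  obtain ⟨γ, hlt⟩ := hlt
  rw [iInf_lt_iff] at hlt
  obtain ⟨hγ1, hlt⟩ := hlt
  rw [iInf_lt_iff] at hlt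
  obtain ⟨hγ2, hlt⟩ := hlt
  exact ⟨γ, hγ1, hγ2, hlt.le⟩

end WassE

section MainE
variable {p K : ℕ}
local notation "E" => EuclideanSpace ℝ (Fin p)

lemma avg_univ (hK : 0 < K) (ν : Fin K → Measure E) (hprob : ∀ k, (ν k) Set.univ = 1) :
    ((K : ENNReal)⁻¹ • ∑ k, ν k) Set.univ = 1 := by
  rw [Measure.smul_apply, Measure.finset_sum_apply, smul_eq_mul]
  rw [Finset.sum_congr rfl fun k _ => hprob k]
  simp only [Finset.sum_const, Finset.card_univ, Fintype.card_fin, nsmul_eq_mul, mul_one]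
  rw [ENNReal.inv_mul_cancel (by exact_mod_cast hK.ne') (ENNReal.natCast_ne_top K)]

lemma integrable_avg (hK : 0 < K) (ν : Fin K → Measure E) {G : Type*} [NormedAddCommGroup G]
    {f : E → G} (hf : ∀ k, Integrable f (ν k)) :
    Integrable f ((K : ENNReal)⁻¹ • ∑ k, ν k) :=
  (integrable_finset_sum_measure.2 fun k _ => hf k).smul_measure
    (ENNReal.inv_ne_top.2 (by exact_mod_cast hK.ne'))

lemma integral_avg (hK : 0 < K) (ν : Fin K → Measure E) {f : E → ℝ}
    (hf : ∀ k, Integrable f (ν k)) :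
    ∫ x, f x ∂((K : ENNReal)⁻¹ • ∑ k, ν k) = (K : ℝ)⁻¹ * ∑ k, ∫ x, f x ∂(ν k) := by
  rw [integral_smul_measure, integral_finset_sum_measure fun k _ => hf k, smul_eq_mul]
  congr 1
  rw [ENNReal.toReal_inv]
  simp

lemma feasible_of_pointmass (hK : 0 < K) (Ξ : Set E) (hΞ : MeasurableSet Ξ)
    (ξs : Fin K → E) (hξs : ∀ k, ξs k ∈ Ξ) {ε : ℝ}
    (ν : Fin K → Measure E)
    (hprob : ∀ k, (ν k) Set.univ = 1) (hsupp : ∀ k, (ν k) Ξᶜ = 0)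
    (hint : ∀ k, Integrable (fun x => ‖x‖) (ν k))
    (hintd : ∀ k, Integrable (fun x => ‖x - ξs k‖) (ν k))
    (hcost : (K : ℝ)⁻¹ * ∑ k, ∫ x, ‖x - ξs k‖ ∂(ν k) ≤ ε) :
    ((K : ENNReal)⁻¹ • ∑ k, ν k) ∈ ambiguitySet Ξ ξs ε := by
  haveI : ∀ k, IsProbabilityMeasure (ν k) := fun k => ⟨hprob k⟩
  have hKtop : (K : ENNReal)⁻¹ ≠ ⊤ := ENNReal.inv_ne_top.2 (by exact_mod_cast hK.ne')
  have hcost0 : 0 ≤ (K : ℝ)⁻¹ * ∑ k, ∫ x, ‖x - ξs k‖ ∂(ν k) := by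
    apply mul_nonneg (by positivity)
    exact Finset.sum_nonneg fun k _ => integral_nonneg fun x => norm_nonneg _
  refine ⟨⟨avg_univ hK ν hprob⟩, ?_, integrable_avg hK ν hint, ?_⟩
  · rw [Measure.smul_apply, Measure.finset_sum_apply,
      Finset.sum_congr rfl fun k _ => hsupp k]
    simp
  · -- Wasserstein bound via the explicit coupling
    set γ : Measure (E × E) := (K : ENNReal)⁻¹ • ∑ k, (Measure.dirac (ξs k)).prod (ν k) with hγ
    have hfst : γ.map Prod.fst = empiricalMeasure ξs := by
      rw [hγ, Measure.map_smul, map_fsum _ _ measurable_fst, empiricalMeasure]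
      congr 1
      refine Finset.sum_congr rfl fun k _ => ?_
      rw [Measure.map_fst_prod, hprob k, one_smul]
    have hsnd : γ.map Prod.snd = (K : ENNReal)⁻¹ • ∑ k, ν k := by
      rw [hγ, Measure.map_smul, map_fsum _ _ measurable_snd]
      congr 1
      refine Finset.sum_congr rfl fun k _ => ?_
      rw [Measure.map_snd_prod, measure_univ, one_smul]
    have hcostγ : ∫⁻ z, edist z.1 z.2 ∂γ
        = ENNReal.ofReal ((K : ℝ)⁻¹ * ∑ k, ∫ x, ‖x - ξs k‖ ∂(ν k)) := by
      rw [hγ, lintegral_smul_measure, lintegral_finset_sum_measure]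
      have hk : ∀ k : Fin K, ∫⁻ z : E × E, edist z.1 z.2 ∂((Measure.dirac (ξs k)).prod (ν k))
          = ENNReal.ofReal (∫ x, ‖x - ξs k‖ ∂(ν k)) := by
        intro k
        rw [MeasureTheory.lintegral_prod _ (measurable_fst.edist measurable_snd).aemeasurable]
        rw [lintegral_dirac]
        have hed : ∀ y : E, edist (ξs k) y = ENNReal.ofReal ‖y - ξs k‖ := fun y => by
          rw [edist_comm, edist_dist, dist_eq_norm]
        simp only [hed]
        rw [← ofReal_integral_eq_lintegral_ofReal (hintd k)
          (Filter.Eventually.of_forall fun y => norm_nonneg _)]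
      rw [Finset.sum_congr rfl fun k _ => hk k,
        ← ENNReal.ofReal_sum_of_nonneg (fun k _ => integral_nonneg fun x => norm_nonneg _),
        ← ENNReal.ofReal_natCast K, ← ENNReal.ofReal_inv_of_pos (by exact_mod_cast hK),
        smul_eq_mul, ← ENNReal.ofReal_mul (by positivity)]
    refine wassersteinDist_le_of_coupling γ hfst hsnd (hcost0.trans hcost) ?_
    rw [hcostγ]
    exact ENNReal.ofReal_le_ofReal hcost

lemma empirical_mem (hK : 0 < K) (Ξ : Set E) (hΞ : MeasurableSet Ξ)
    (ξs : Fin K → E) (hξs : ∀ k, ξs k ∈ Ξ) {ε : ℝ} (hε : 0 ≤ ε) :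
    empiricalMeasure ξs ∈ ambiguitySet Ξ ξs ε :=
  ⟨empirical_isProb ξs hK, empirical_compl_eq_zero ξs hΞ hξs,
    integrable_empirical ξs hK _, wassersteinDist_self_le _ hε⟩



noncomputable def sigmaSup (Ξ : Set E) (h : E → ℝ) (lam : ℝ) (x : E) : EReal :=
  sSup {s : EReal | ∃ ξ ∈ Ξ, s = ((h ξ - lam * ‖ξ - x‖ : ℝ) : EReal)}

lemma coe_le_sigmaSup {Ξ : Set E} (h : E → ℝ) (lam : ℝ) (x : E) {ξ : E} (hξ : ξ ∈ Ξ) :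
    ((h ξ - lam * ‖ξ - x‖ : ℝ) : EReal) ≤ sigmaSup Ξ h lam x :=
  le_sSup ⟨ξ, hξ, rfl⟩

lemma sigmaSup_ne_bot {Ξ : Set E} (hne : Ξ.Nonempty) (h : E → ℝ) (lam : ℝ) (x : E) :
    sigmaSup Ξ h lam x ≠ ⊥ := by
  obtain ⟨ξ, hξ⟩ := hne
  intro hb
  have h1 := coe_le_sigmaSup (Ξ := Ξ) h lam x hξ
  rw [hb, le_bot_iff] at h1
  exact EReal.coe_ne_bot _ h1

lemma drDualBody_eq (Ξ : Set E) (ξs : Fin K → E) (ε lam : ℝ) (h : E → ℝ) :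
    drDualBody Ξ ξs ε lam h = ((lam * ε : ℝ) : EReal) + (((K : ℝ)⁻¹ : ℝ) : EReal) *
      ∑ k : Fin K, sigmaSup Ξ h lam (ξs k) := rfl

lemma dualBody_eq_top (hK : 0 < K) {Ξ : Set E} (hne : Ξ.Nonempty) (ξs : Fin K → E)
    (ε lam : ℝ) (h : E → ℝ) {k₀ : Fin K} (htop : sigmaSup Ξ h lam (ξs k₀) = ⊤) :
    drDualBody Ξ ξs ε lam h = ⊤ := by
  rw [drDualBody_eq]
  have hsum : ∑ k : Fin K, sigmaSup Ξ h lam (ξs k) = ⊤ :=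
    ereal_fsum_eq_top (Finset.mem_univ k₀) htop fun k _ => sigmaSup_ne_bot hne h lam (ξs k)
  rw [hsum, EReal.mul_top_of_pos, EReal.add_top_of_ne_bot (EReal.coe_ne_bot _)]
  exact_mod_cast inv_pos.2 (show (0:ℝ) < K by exact_mod_cast hK)

lemma dualBody_eq_coe {Ξ : Set E} (hne : Ξ.Nonempty) (ξs : Fin K → E) (ε lam : ℝ) (h : E → ℝ)
    (hnt : ∀ k, sigmaSup Ξ h lam (ξs k) ≠ ⊤) :
    drDualBody Ξ ξs ε lam h
      = ((lam * ε + (K : ℝ)⁻¹ * ∑ k, (sigmaSup Ξ h lam (ξs k)).toReal : ℝ) : EReal) := by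
  rw [drDualBody_eq, EReal.coe_add, EReal.coe_mul, EReal.coe_mul, ereal_coe_fsum]
  congr 1
  congr 1
  exact Finset.sum_congr rfl fun k _ =>
    (EReal.coe_toReal (hnt k) (sigmaSup_ne_bot hne h lam (ξs k))).symm

lemma weak_duality (hK : 0 < K) {Ξ : Set E} (hΞ : MeasurableSet Ξ) (hne : Ξ.Nonempty)
    (ξs : Fin K → E) (hξs : ∀ k, ξs k ∈ Ξ) {ε : ℝ} (hε : 0 ≤ ε)
    (h : E → ℝ) {lam : ℝ} (hlam : 0 ≤ lam)
    {Q : Measure E} (hQ : Q ∈ ambiguitySet Ξ ξs ε) (hint : Integrable h Q) :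
    ((∫ ξ, h ξ ∂Q : ℝ) : EReal) ≤ drDualBody Ξ ξs ε lam h := by
  obtain ⟨hQprob, hQsupp, hQnorm, hQwass⟩ := hQ
  by_cases htop : ∃ k, sigmaSup Ξ h lam (ξs k) = ⊤
  · obtain ⟨k₀, hk₀⟩ := htop
    rw [dualBody_eq_top hK hne ξs ε lam h hk₀]
    exact le_top
  push_neg at htop
  set s : Fin K → ℝ := fun k => (sigmaSup Ξ h lam (ξs k)).toReal with hsdef
  have hbound : ∀ k, ∀ ξ ∈ Ξ, h ξ - lam * ‖ξ - ξs k‖ ≤ s k := by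
    intro k ξ hξ
    have h1 := coe_le_sigmaSup h lam (ξs k) hξ (Ξ := Ξ)
    rw [← EReal.coe_toReal (htop k) (sigmaSup_ne_bot hne h lam (ξs k))] at h1
    exact_mod_cast h1
  haveI := hQprob
  haveI : IsProbabilityMeasure (empiricalMeasure ξs) := empirical_isProb ξs hK
  -- the bounded measurable version of s as a function on E
  set st : E → ℝ := (Set.range ξs).indicator (fun x => (sigmaSup Ξ h lam x).toReal)
    with hstdef
  have hstk : ∀ k, st (ξs k) = s k := fun k =>
    Set.indicator_of_mem (Set.mem_range_self k) _
  have hstmeas : Measurable st :=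
    measurable_of_const_off_finite (Set.finite_range ξs) 0 fun x hx =>
      Set.indicator_of_notMem hx _
  have hstbdd : ∀ x, |st x| ≤ ∑ k, |s k| := by
    intro x
    by_cases hx : x ∈ Set.range ξs
    · obtain ⟨k, rfl⟩ := hx
      rw [hstk k]
      exact Finset.single_le_sum (f := fun k => |s k|) (fun k _ => abs_nonneg (s k))
        (Finset.mem_univ k)
    · rw [hstdef, Set.indicator_of_notMem hx, abs_zero]
      exact Finset.sum_nonneg fun k _ => abs_nonneg (s k)
  have key : ∀ δ : ℝ, 0 < δ →
      ∫ ξ, h ξ ∂Q ≤ lam * ε + (K : ℝ)⁻¹ * ∑ k, s k + lam * δ := by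
    intro δ hδ
    obtain ⟨γ, hγ1, hγ2, hγc⟩ := exists_coupling_of_wass_le
      (integrable_empirical ξs hK _) hQnorm hε hδ hQwass
    haveI : IsProbabilityMeasure γ := by
      constructor
      have : (γ.map Prod.fst) Set.univ = γ Set.univ := by
        rw [Measure.map_apply measurable_fst MeasurableSet.univ]
        rfl
      rw [← this, hγ1, empirical_univ ξs hK]
    -- integrabilities
    have i1 : Integrable (fun z : E × E => st z.1) γ := by
      refine Integrable.mono' (integrable_const (∑ k, |s k|))
        ((hstmeas.comp measurable_fst).aestronglyMeasurable)
        (Filter.Eventually.of_forall fun z => ?_)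
      rw [Real.norm_eq_abs]
      exact hstbdd z.1
    have i2 : Integrable (fun z : E × E => dist z.1 z.2) γ := by
      refine ⟨(measurable_fst.dist measurable_snd).aestronglyMeasurable, ?_⟩
      rw [hasFiniteIntegral_iff_ofReal (Filter.Eventually.of_forall fun z => dist_nonneg)]
      have : ∀ z : E × E, ENNReal.ofReal (dist z.1 z.2) = edist z.1 z.2 := fun z =>
        (edist_dist _ _).symm
      simp only [this]
      exact lt_of_le_of_lt hγc ENNReal.ofReal_lt_top
    have hsm : AEStronglyMeasurable h (γ.map Prod.snd) := hγ2.symm ▸ hint.1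
    have i3 : Integrable (fun z : E × E => h z.2) γ := by
      have h0 : Integrable h (γ.map Prod.snd) := hγ2.symm ▸ hint
      have := (integrable_map_measure hsm measurable_snd.aemeasurable).1 h0
      simpa [Function.comp_def] using this
    -- a.e. facts
    have a1 : ∀ᵐ z ∂γ, z.1 ∈ Set.range ξs := by
      have hms : MeasurableSet ((Set.range ξs)ᶜ) := (Set.finite_range ξs).measurableSet.compl
      have : γ (Prod.fst ⁻¹' (Set.range ξs)ᶜ) = 0 := by
        rw [← Measure.map_apply measurable_fst hms, hγ1]
        exact empirical_compl_eq_zero ξs (Set.finite_range ξs).measurableSet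
          fun k => Set.mem_range_self k
      rw [ae_iff]
      exact this
    have a2 : ∀ᵐ z ∂γ, z.2 ∈ Ξ := by
      have : γ (Prod.snd ⁻¹' Ξᶜ) = 0 := by
        rw [← Measure.map_apply measurable_snd hΞ.compl, hγ2]
        exact hQsupp
      rw [ae_iff]
      exact this
    have aineq : ∀ᵐ z ∂γ, h z.2 ≤ st z.1 + lam * dist z.1 z.2 := by
      filter_upwards [a1, a2] with z hz1 hz2
      obtain ⟨k, hk⟩ := hz1
      have hst1 : st z.1 = s k := by rw [← hk, hstk]
      have hd : dist z.1 z.2 = ‖z.2 - ξs k‖ := by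
        rw [dist_comm, dist_eq_norm, hk]
      have := hbound k z.2 hz2
      rw [hst1, hd]
      linarith
    -- integral computations
    have e1 : ∫ z : E × E, h z.2 ∂γ = ∫ ξ, h ξ ∂Q := by
      rw [← hγ2, integral_map measurable_snd.aemeasurable hsm]
    have e2 : ∫ z : E × E, st z.1 ∂γ = (K : ℝ)⁻¹ * ∑ k, s k := by
      have : ∫ x, st x ∂(empiricalMeasure ξs) = ∫ z : E × E, st z.1 ∂γ := by
        rw [← hγ1, integral_map measurable_fst.aemeasurable
          (hγ1.symm ▸ hstmeas.aestronglyMeasurable)]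
      rw [← this, integral_empirical ξs hK st]
      congr 1
      exact Finset.sum_congr rfl fun k _ => hstk k
    have e3 : ∫ z : E × E, dist z.1 z.2 ∂γ ≤ ε + δ := by
      rw [integral_eq_lintegral_of_nonneg_ae (Filter.Eventually.of_forall fun z => dist_nonneg)
        (measurable_fst.dist measurable_snd).aestronglyMeasurable]
      refine ENNReal.toReal_le_of_le_ofReal (by linarith) ?_
      have : ∀ z : E × E, ENNReal.ofReal (dist z.1 z.2) = edist z.1 z.2 := fun z =>
        (edist_dist _ _).symm
      simp only [this]
      exact hγc
    have mono : ∫ z : E × E, h z.2 ∂γ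
        ≤ (∫ z : E × E, st z.1 ∂γ) + ∫ z : E × E, lam * dist z.1 z.2 ∂γ := by
      rw [← integral_add i1 (i2.const_mul lam)]
      exact integral_mono_ae i3 (i1.add (i2.const_mul lam)) aineq
    rw [e1, e2, integral_const_mul] at mono
    have h4 : lam * ∫ z : E × E, dist z.1 z.2 ∂γ ≤ lam * (ε + δ) :=
      mul_le_mul_of_nonneg_left e3 hlam
    linarith
  have final : ∫ ξ, h ξ ∂Q ≤ lam * ε + (K : ℝ)⁻¹ * ∑ k, s k := by
    by_contra hc
    push_neg at hc
    set X := ∫ ξ, h ξ ∂Q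
    set Y := lam * ε + (K : ℝ)⁻¹ * ∑ k, s k
    have hδ : 0 < (X - Y) / (lam + 1) := by
      apply div_pos (by linarith) (by linarith)
    have := key _ hδ
    have h2 : lam * ((X - Y) / (lam + 1)) < X - Y := by
      rw [mul_div_assoc']
      rw [div_lt_iff₀ (by linarith)]
      nlinarith
    linarith
  rw [dualBody_eq_coe hne ξs ε lam h htop]
  exact_mod_cast final

lemma epigraph_closed {Ξ : Set E} (hcl : IsClosed Ξ) {g : E → ℝ}
    (hlsc : LowerSemicontinuousOn g Ξ) :
    IsClosed {q : E × ℝ | q.1 ∈ Ξ ∧ g q.1 ≤ q.2} := by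
  rw [← isSeqClosed_iff_isClosed]
  intro q qlim hq hlim
  have h1 : Filter.Tendsto (fun n => (q n).1) Filter.atTop (nhds qlim.1) :=
    (continuous_fst.tendsto _).comp hlim
  have h2 : Filter.Tendsto (fun n => (q n).2) Filter.atTop (nhds qlim.2) :=
    (continuous_snd.tendsto _).comp hlim
  have hmem : qlim.1 ∈ Ξ :=
    hcl.isSeqClosed (fun n => (hq n).1) h1
  refine ⟨hmem, ?_⟩
  -- g qlim.1 ≤ qlim.2 by lower semicontinuity
  by_contra hlt
  push_neg at hlt
  obtain ⟨y, hy1, hy2⟩ := exists_between hlt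
  have hev := hlsc qlim.1 hmem y hy2
  have htend : Filter.Tendsto (fun n => (q n).1) Filter.atTop (nhdsWithin qlim.1 Ξ) :=
    tendsto_nhdsWithin_iff.2 ⟨h1, Filter.Eventually.of_forall fun n => (hq n).1⟩
  have hev2 : ∀ᶠ n in Filter.atTop, y < g (q n).1 := htend.eventually hev
  have hle : ∀ᶠ n in Filter.atTop, y ≤ (q n).2 :=
    hev2.mono fun n hn => hn.le.trans (hq n).2
  have := ge_of_tendsto h2 hle
  linarith

lemma exists_affine_minorant {Ξ : Set E} (hcl : IsClosed Ξ) {g : E → ℝ}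
    (hg : ConvexOn ℝ Ξ g) (hlsc : LowerSemicontinuousOn g Ξ) {x₀ : E} (hx₀ : x₀ ∈ Ξ) :
    ∃ (f : E →L[ℝ] ℝ) (b : ℝ), ∀ ξ ∈ Ξ, f ξ + b ≤ g ξ := by
  set C : Set (E × ℝ) := {q | q.1 ∈ Ξ ∧ g q.1 ≤ q.2} with hC
  have hCconv : Convex ℝ C := hg.convex_epigraph
  have hCclosed : IsClosed C := epigraph_closed hcl hlsc
  have hnot : ((x₀, g x₀ - 1) : E × ℝ) ∉ C := by
    intro hc
    have := hc.2
    simp only at this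
    linarith
  obtain ⟨f, u, hfC, hfpt⟩ := geometric_hahn_banach_closed_point hCconv hCclosed hnot
  set c : ℝ := f (0, 1) with hcdef
  have hsplit : ∀ (x : E) (y : ℝ), f (x, y) = f (x, 0) + y * c := by
    intro x y
    have hxy : ((x, y) : E × ℝ) = (x, (0:ℝ)) + y • ((0:E), (1:ℝ)) := by
      simp [Prod.ext_iff]
    rw [hxy, map_add, f.map_smul, smul_eq_mul]
  have hcle : c ≤ 0 := by
    by_contra hcpos
    push_neg at hcpos
    set y := max (g x₀) ((u - f (x₀, 0)) / c + 1) with hydef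
    have hyC : ((x₀, y) : E × ℝ) ∈ C := ⟨hx₀, le_max_left _ _⟩
    have h1 := hfC _ hyC
    rw [hsplit] at h1
    have hy2 : (u - f (x₀, 0)) / c + 1 ≤ y := le_max_right _ _
    have h2 : u - f (x₀, 0) + c ≤ y * c := by
      have : u - f (x₀, 0) + c = ((u - f (x₀, 0)) / c + 1) * c := by field_simp
      rw [this]
      exact mul_le_mul_of_nonneg_right hy2 hcpos.le
    linarith
  have hcneg : c < 0 := by
    rcases lt_or_eq_of_le hcle with hlt | heq
    · exact hlt
    · exfalso
      have h1 := hfC (x₀, g x₀) ⟨hx₀, le_rfl⟩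
      rw [hsplit] at h1 hfpt
      rw [← heq] at h1 hfpt
      linarith
  refine ⟨(-c)⁻¹ • (f.comp (ContinuousLinearMap.inl ℝ E ℝ)), u / c, ?_⟩
  intro ξ hξ
  have h1 := hfC (ξ, g ξ) ⟨hξ, le_rfl⟩
  rw [hsplit] at h1
  have hfin : ((-c)⁻¹ • (f.comp (ContinuousLinearMap.inl ℝ E ℝ))) ξ = (-c)⁻¹ * f (ξ, 0) := by
    simp [ContinuousLinearMap.smul_apply, ContinuousLinearMap.comp_apply]
  rw [hfin]
  have hcne : c ≠ 0 := hcneg.ne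
  have hc' : (0:ℝ) < -c := by linarith
  rw [← sub_nonneg]
  have expand : g ξ - ((-c)⁻¹ * f (ξ, 0) + u / c) = (u - (f (ξ, 0) + g ξ * c)) / (-c) := by
    field_simp
    ring
  rw [expand]
  apply div_nonneg _ hc'.le
  linarith

lemma ereal_le_coe_of_forall_lt {x : EReal} {a : ℝ}
    (hx : ∀ δ : ℝ, 0 < δ → x ≤ ((a + δ : ℝ) : EReal)) : x ≤ (a : EReal) := by
  by_contra hc
  push_neg at hc
  obtain ⟨y, hy1, hy2⟩ := EReal.exists_between_coe_real hc
  have hay : a < y := by exact_mod_cast hy1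
  have := hx (y - a) (by linarith)
  rw [show a + (y - a) = y by ring] at this
  exact absurd (this.trans_lt hy2) (lt_irrefl x)

variable {L : ℕ}

lemma h_growth (hL : 0 < L) {Ξ : Set E} (hcl : IsClosed Ξ) {h : E → ℝ} {hl : Fin L → E → ℝ}
    (hstruct : IsPointwiseMaxOfConcave Ξ h hl) {xk : E} (hxk : xk ∈ Ξ) :
    ∃ M Λ : ℝ, 0 ≤ Λ ∧ ∀ ξ ∈ Ξ, h ξ ≤ M + Λ * ‖ξ - xk‖ := by
  obtain ⟨heq, hconv, hlsc⟩ := hstruct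
  haveI : Nonempty (Fin L) := Fin.pos_iff_nonempty.1 hL
  choose f b hfb using fun ℓ : Fin L => exists_affine_minorant hcl (hconv ℓ) (hlsc ℓ) hxk
  refine ⟨∑ ℓ, |(-(f ℓ xk) - b ℓ)|, ∑ ℓ, ‖f ℓ‖,
    Finset.sum_nonneg fun ℓ _ => norm_nonneg _, ?_⟩
  intro ξ hξ
  rw [heq ξ hξ]
  refine ciSup_le fun ℓ => ?_
  have h1 : f ℓ ξ + b ℓ ≤ -(hl ℓ ξ) := hfb ℓ ξ hξ
  have h2 : |f ℓ xk - f ℓ ξ| ≤ ‖f ℓ‖ * ‖ξ - xk‖ := by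
    rw [← map_sub]
    calc |(f ℓ) (xk - ξ)| = ‖(f ℓ) (xk - ξ)‖ := (Real.norm_eq_abs _).symm
      _ ≤ ‖f ℓ‖ * ‖xk - ξ‖ := (f ℓ).le_opNorm _
      _ = ‖f ℓ‖ * ‖ξ - xk‖ := by rw [norm_sub_rev]
  have h2' : f ℓ xk - f ℓ ξ ≤ ‖f ℓ‖ * ‖ξ - xk‖ := (le_abs_self _).trans h2
  have h3 : (-(f ℓ xk) - b ℓ) ≤ ∑ ℓ', |(-(f ℓ' xk) - b ℓ')| :=
    (le_abs_self _).trans (Finset.single_le_sum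
      (f := fun ℓ' => |(-(f ℓ' xk) - b ℓ')|) (fun _ _ => abs_nonneg _) (Finset.mem_univ ℓ))
  have h4 : ‖f ℓ‖ ≤ ∑ ℓ', ‖f ℓ'‖ :=
    Finset.single_le_sum (f := fun ℓ' => ‖f ℓ'‖) (fun _ _ => norm_nonneg _) (Finset.mem_univ ℓ)
  have h6 : ‖f ℓ‖ * ‖ξ - xk‖ ≤ (∑ ℓ', ‖f ℓ'‖) * ‖ξ - xk‖ :=
    mul_le_mul_of_nonneg_right h4 (norm_nonneg _)
  linarith

lemma usc_bound (hL : 0 < L) {Ξ : Set E} {h : E → ℝ} {hl : Fin L → E → ℝ}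
    (hstruct : IsPointwiseMaxOfConcave Ξ h hl) {xk : E} (hxk : xk ∈ Ξ) {δ : ℝ} (hδ : 0 < δ) :
    ∃ r > 0, ∀ ξ ∈ Ξ, ‖ξ - xk‖ < r → h ξ ≤ h xk + δ := by
  obtain ⟨heq, hconv, hlsc⟩ := hstruct
  haveI : Nonempty (Fin L) := Fin.pos_iff_nonempty.1 hL
  have hev : ∀ᶠ ξ in nhdsWithin xk Ξ, ∀ ℓ, hl ℓ ξ < hl ℓ xk + δ := by
    rw [Filter.eventually_all]
    intro ℓ
    have hy : -(hl ℓ xk) - δ < (fun ξ => -(hl ℓ ξ)) xk := by dsimp only; linarith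
    have := hlsc ℓ xk hxk _ hy
    exact this.mono fun ξ hξ => by dsimp only at hξ; linarith
  rw [Filter.eventually_iff, Metric.mem_nhdsWithin_iff] at hev
  obtain ⟨r, hr, hsub⟩ := hev
  refine ⟨r, hr, fun ξ hξ hnorm => ?_⟩
  have hall := hsub ⟨by rwa [Metric.mem_ball, dist_eq_norm], hξ⟩
  rw [heq ξ hξ]
  refine ciSup_le fun ℓ => ?_
  have h1 : hl ℓ xk ≤ h xk := by
    rw [heq xk hxk]
    exact le_ciSup (f := fun ℓ => hl ℓ xk) (Set.finite_range _).bddAbove ℓ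
  have h2 := hall ℓ
  linarith

lemma exists_lam_sigma_le (hL : 0 < L) {Ξ : Set E} (hcl : IsClosed Ξ) {h : E → ℝ}
    {hl : Fin L → E → ℝ} (hstruct : IsPointwiseMaxOfConcave Ξ h hl) {xk : E} (hxk : xk ∈ Ξ)
    {δ : ℝ} (hδ : 0 < δ) :
    ∃ lam₀ : ℝ, 0 ≤ lam₀ ∧ ∀ lam, lam₀ ≤ lam →
      sigmaSup Ξ h lam xk ≤ ((h xk + δ : ℝ) : EReal) := by
  obtain ⟨M, Λ, hΛ, hMb⟩ := h_growth hL hcl hstruct hxk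
  obtain ⟨r, hr, hrb⟩ := usc_bound hL hstruct hxk hδ
  refine ⟨max 0 (max Λ (Λ + (M - h xk - δ) / r)), le_max_left _ _, ?_⟩
  intro lam hlam
  have hlam0 : 0 ≤ lam := le_trans (le_max_left _ _) hlam
  have hlamΛ : Λ ≤ lam := le_trans (le_trans (le_max_left _ _) (le_max_right _ _)) hlam
  have hlam2 : Λ + (M - h xk - δ) / r ≤ lam :=
    le_trans (le_trans (le_max_right _ _) (le_max_right _ _)) hlam
  refine sSup_le ?_
  rintro s ⟨ξ, hξ, rfl⟩
  rw [EReal.coe_le_coe_iff]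
  by_cases hcase : ‖ξ - xk‖ < r
  · have := hrb ξ hξ hcase
    nlinarith [mul_nonneg hlam0 (norm_nonneg (ξ - xk))]
  · push_neg at hcase
    have hub := hMb ξ hξ
    have key : M - h xk - δ ≤ (lam - Λ) * r := by
      calc M - h xk - δ = ((M - h xk - δ) / r) * r := by field_simp
        _ ≤ (lam - Λ) * r := mul_le_mul_of_nonneg_right (by linarith) hr.le
    nlinarith [mul_le_mul_of_nonneg_left hcase (sub_nonneg.2 hlamΛ)]

lemma dual_le_P0 (hL : 0 < L) (hK : 0 < K) {Ξ : Set E} (hne : Ξ.Nonempty) (hcl : IsClosed Ξ)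
    {h : E → ℝ} {hl : Fin L → E → ℝ} (hstruct : IsPointwiseMaxOfConcave Ξ h hl)
    (ξs : Fin K → E) (hξs : ∀ k, ξs k ∈ Ξ) :
    sInf {r : EReal | ∃ lam : ℝ, 0 ≤ lam ∧ r = drDualBody Ξ ξs 0 lam h}
      ≤ (((K : ℝ)⁻¹ * ∑ k, h (ξs k) : ℝ) : EReal) := by
  refine ereal_le_coe_of_forall_lt fun δ hδ => ?_
  choose lam₀ hlam₀ hlamb using fun k => exists_lam_sigma_le hL hcl hstruct (hξs k) hδ
  set lam := ∑ k, lam₀ k with hlamdef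
  have hlamnn : 0 ≤ lam := Finset.sum_nonneg fun k _ => hlam₀ k
  have hge : ∀ k, lam₀ k ≤ lam := fun k =>
    Finset.single_le_sum (fun k _ => hlam₀ k) (Finset.mem_univ k)
  have hσ : ∀ k, sigmaSup Ξ h lam (ξs k) ≤ ((h (ξs k) + δ : ℝ) : EReal) := fun k =>
    hlamb k lam (hge k)
  have hnt : ∀ k, sigmaSup Ξ h lam (ξs k) ≠ ⊤ := fun k =>
    ne_top_of_le_ne_top (EReal.coe_ne_top _) (hσ k)
  have hbody := dualBody_eq_coe hne ξs 0 lam h hnt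
  refine le_trans (sInf_le ⟨lam, hlamnn, rfl⟩) ?_
  rw [hbody, EReal.coe_le_coe_iff]
  have hsk : ∀ k, (sigmaSup Ξ h lam (ξs k)).toReal ≤ h (ξs k) + δ := by
    intro k
    have h1 := hσ k
    rw [← EReal.coe_toReal (hnt k) (sigmaSup_ne_bot hne h lam (ξs k))] at h1
    exact_mod_cast h1
  have hsum : ∑ k, (sigmaSup Ξ h lam (ξs k)).toReal ≤ ∑ k, h (ξs k) + K * δ := by
    calc ∑ k, (sigmaSup Ξ h lam (ξs k)).toReal ≤ ∑ k, (h (ξs k) + δ) :=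
          Finset.sum_le_sum fun k _ => hsk k
      _ = ∑ k, h (ξs k) + K * δ := by
          rw [Finset.sum_add_distrib]
          simp [mul_comm]
  have hKpos : (0:ℝ) < K := by exact_mod_cast hK
  have hKinv : (K:ℝ)⁻¹ * (K:ℝ) = 1 := inv_mul_cancel₀ hKpos.ne'
  have : (K:ℝ)⁻¹ * ∑ k, (sigmaSup Ξ h lam (ξs k)).toReal
      ≤ (K:ℝ)⁻¹ * (∑ k, h (ξs k) + K * δ) :=
    mul_le_mul_of_nonneg_left hsum (by positivity)
  rw [mul_add, ← mul_assoc, hKinv] at this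
  linarith

/-- The per-sample "cost–value" set. -/
noncomputable def Spt (Ξ : Set E) (h : E → ℝ) (xk : E) : Set (ℝ × ℝ) :=
  (fun ξ => (‖ξ - xk‖, h ξ)) '' Ξ

/-- Averages of convex combinations from the per-sample sets. -/
noncomputable def Bset (Ξ : Set E) (h : E → ℝ) (ξs : Fin K → E) : Set (ℝ × ℝ) :=
  {b | ∃ g : Fin K → ℝ × ℝ, (∀ k, g k ∈ convexHull ℝ (Spt Ξ h (ξs k))) ∧
    b = (K : ℝ)⁻¹ • ∑ k, g k}

lemma Bset_convex (Ξ : Set E) (h : E → ℝ) (ξs : Fin K → E) : Convex ℝ (Bset Ξ h ξs) := by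
  rintro b1 ⟨g1, hg1, rfl⟩ b2 ⟨g2, hg2, rfl⟩ a b' ha hb' hab
  refine ⟨fun k => a • g1 k + b' • g2 k, fun k =>
    (convex_convexHull ℝ _) (hg1 k) (hg2 k) ha hb' hab, ?_⟩
  rw [smul_comm a, smul_comm b', ← smul_add]
  congr 1
  rw [Finset.smul_sum, Finset.smul_sum, ← Finset.sum_add_distrib]

lemma point_mem_Bset {Ξ : Set E} (h : E → ℝ) (ξs : Fin K → E) (ξv : Fin K → E)
    (hv : ∀ k, ξv k ∈ Ξ) :
    (K : ℝ)⁻¹ • ∑ k, ((‖ξv k - ξs k‖, h (ξv k)) : ℝ × ℝ) ∈ Bset Ξ h ξs :=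
  ⟨fun k => (‖ξv k - ξs k‖, h (ξv k)), fun k =>
    subset_convexHull ℝ _ ⟨ξv k, hv k, rfl⟩, rfl⟩

lemma primal_ge_of_mem_B (hK : 0 < K) {Ξ : Set E} (hΞm : MeasurableSet Ξ)
    (ξs : Fin K → E) (hξs : ∀ k, ξs k ∈ Ξ) {ε : ℝ} {h : E → ℝ} {b : ℝ × ℝ}
    (hb : b ∈ Bset Ξ h ξs) (hcost : b.1 ≤ ε) :
    ∃ Q ∈ ambiguitySet Ξ ξs ε, Integrable h Q ∧ ∫ ξ, h ξ ∂Q = b.2 := by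
  obtain ⟨g, hg, rfl⟩ := hb
  have hrepr := fun k => (mem_convexHull_iff_exists_fintype (R := ℝ)).1 (hg k)
  choose ι hι w zpt hw0 hw1 hzS hzsum using hrepr
  have hmem := fun k => fun j : ι k => hzS k j
  choose ζ hζΞ hζeq using hmem
  set ν : Fin K → Measure E := fun k => @mixM _ _ _ (hι k) _ (w k) (ζ k) with hν
  have hint : ∀ (G : Type) (_ : NormedAddCommGroup G) (f : E → G) k, Integrable f (ν k) :=
    fun G _ f k => @integrable_mixM _ _ _ _ (hι k) (w k) (ζ k) G _ f
  have hsumw : ∀ k, @Finset.sum (ι k) ℝ _ (@Finset.univ (ι k) (hι k)) (w k) = 1 := hw1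
  have hcostk : ∀ k, ∫ x, ‖x - ξs k‖ ∂(ν k) = (g k).1 := by
    intro k
    rw [hν]
    rw [@integral_mixM _ _ _ _ (hι k) (w k) (ζ k) (hw0 k) (fun x => ‖x - ξs k‖)]
    have : ∀ j : ι k, ‖ζ k j - ξs k‖ = (zpt k j).1 := fun j => by rw [← hζeq k j]
    rw [← hzsum k, Prod.fst_sum]
    exact @Finset.sum_congr (ι k) ℝ _ _ _ _ _ rfl fun j _ => by rw [this j, Prod.smul_fst, smul_eq_mul]
  have hvalk : ∀ k, ∫ x, h x ∂(ν k) = (g k).2 := by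
    intro k
    rw [hν]
    rw [@integral_mixM _ _ _ _ (hι k) (w k) (ζ k) (hw0 k) h]
    have : ∀ j : ι k, h (ζ k j) = (zpt k j).2 := fun j => by rw [← hζeq k j]
    rw [← hzsum k, Prod.snd_sum]
    exact @Finset.sum_congr (ι k) ℝ _ _ _ _ _ rfl fun j _ => by rw [this j, Prod.smul_snd, smul_eq_mul]
  have hcost' : (K : ℝ)⁻¹ * ∑ k, ∫ x, ‖x - ξs k‖ ∂(ν k) ≤ ε := by
    rw [Finset.sum_congr rfl fun k _ => hcostk k]
    calc (K : ℝ)⁻¹ * ∑ k, (g k).1 = ((K : ℝ)⁻¹ • ∑ k, g k).1 := by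
          rw [Prod.smul_fst, Prod.fst_sum, smul_eq_mul]
      _ ≤ ε := hcost
  have hQmem : ((K : ENNReal)⁻¹ • ∑ k, ν k) ∈ ambiguitySet Ξ ξs ε := by
    refine feasible_of_pointmass hK Ξ hΞm ξs hξs ν ?_ ?_ ?_ ?_ hcost'
    · exact fun k => @mixM_univ _ _ _ _ (hι k) (w k) (ζ k) (hw1 k) (hw0 k)
    · exact fun k => @mixM_compl_eq_zero _ _ _ _ (hι k) (w k) (ζ k) _ hΞm (hζΞ k)
    · exact fun k => hint _ _ _ k
    · exact fun k => hint _ _ _ k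
  refine ⟨_, hQmem, integrable_avg hK ν fun k => hint _ _ h k, ?_⟩
  rw [integral_avg hK ν fun k => hint _ _ h k, Finset.sum_congr rfl fun k _ => hvalk k,
    Prod.smul_snd, Prod.snd_sum, smul_eq_mul]

lemma dual_le_of_no_plan (hK : 0 < K) {Ξ : Set E} (hne : Ξ.Nonempty) (ξs : Fin K → E)
    (hξs : ∀ k, ξs k ∈ Ξ) {ε c : ℝ} (hεpos : 0 < ε) {h : E → ℝ}
    (hdisj : ¬ (Bset Ξ h ξs ∩ ((Set.Iio ε) ×ˢ (Set.Ioi c))).Nonempty) :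
    sInf {r : EReal | ∃ lam : ℝ, 0 ≤ lam ∧ r = drDualBody Ξ ξs ε lam h} ≤ (c : EReal) := by
  have hKpos : (0:ℝ) < K := by exact_mod_cast hK
  have hdisj' : Disjoint ((Set.Iio ε) ×ˢ (Set.Ioi c)) (Bset Ξ h ξs) :=
    Set.disjoint_left.2 fun a haU haB => hdisj ⟨a, haB, haU⟩
  obtain ⟨f, u, hfU, hfB⟩ := geometric_hahn_banach_open
    ((convex_Iio (ε : ℝ)).prod (convex_Ioi c)) (isOpen_Iio.prod isOpen_Ioi)
    (Bset_convex Ξ h ξs) hdisj'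
  set α := f (1, 0) with hαdef
  set β := f (0, 1) with hβdef
  have hrepr : ∀ q : ℝ × ℝ, f q = q.1 * α + q.2 * β := by
    intro q
    have hq : q = q.1 • ((1:ℝ), (0:ℝ)) + q.2 • ((0:ℝ), (1:ℝ)) := by
      simp [Prod.ext_iff]
    conv_lhs => rw [hq]
    rw [map_add, f.map_smul, f.map_smul, smul_eq_mul, smul_eq_mul]
  have hrepr' : ∀ a b : ℝ, f (a, b) = a * α + b * β := fun a b => hrepr (a, b)
  set P0 : ℝ := (K : ℝ)⁻¹ * ∑ k, h (ξs k) with hP0def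
  have hb0 : (((0:ℝ), P0) : ℝ × ℝ) ∈ Bset Ξ h ξs := by
    have hmem := point_mem_Bset h ξs ξs hξs
    have heq : (K : ℝ)⁻¹ • ∑ k, ((‖ξs k - ξs k‖, h (ξs k)) : ℝ × ℝ) = ((0:ℝ), P0) := by
      have : ∀ k : Fin K, ((‖ξs k - ξs k‖, h (ξs k)) : ℝ × ℝ) = (0, h (ξs k)) := fun k => by
        simp
      rw [Finset.sum_congr rfl fun k _ => this k]
      apply Prod.ext
      · simp [Prod.fst_sum]
      · simp [Prod.snd_sum, hP0def]
    rwa [heq] at hmem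
  have hub0 : u ≤ P0 * β := by
    have := hfB _ hb0
    rwa [hrepr' 0 P0, zero_mul, zero_add] at this
  -- sign facts
  have hα : 0 ≤ α := by
    by_contra hαneg
    push_neg at hαneg
    set t : ℝ := min (ε - 1) ((u - (c + 1) * β) / α) with htdef
    have ht1 : t ≤ ε - 1 := min_le_left _ _
    have hmemU : ((t, c + 1) : ℝ × ℝ) ∈ (Set.Iio ε) ×ˢ (Set.Ioi c) :=
      Set.mk_mem_prod (Set.mem_Iio.2 (by linarith)) (Set.mem_Ioi.2 (lt_add_one c))
    have hlt := hfU _ hmemU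
    rw [hrepr' t (c + 1)] at hlt
    have ht2 : t ≤ (u - (c + 1) * β) / α := min_le_right _ _
    have : (u - (c + 1) * β) / α * α ≤ t * α := mul_le_mul_of_nonpos_right ht2 hαneg.le
    rw [div_mul_cancel₀ _ hαneg.ne] at this
    linarith
  have hβ : β ≤ 0 := by
    by_contra hβpos
    push_neg at hβpos
    set v : ℝ := max (c + 1) ((u - (ε - 1) * α) / β) with hvdef
    have hv1 : c + 1 ≤ v := le_max_left _ _
    have hmemU : ((ε - 1, v) : ℝ × ℝ) ∈ (Set.Iio ε) ×ˢ (Set.Ioi c) :=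
      Set.mk_mem_prod (Set.mem_Iio.2 (by linarith)) (Set.mem_Ioi.2 (by linarith))
    have hlt := hfU _ hmemU
    rw [hrepr' (ε - 1) v] at hlt
    have hv2 : (u - (ε - 1) * α) / β ≤ v := le_max_right _ _
    have : (u - (ε - 1) * α) / β * β ≤ v * β := mul_le_mul_of_nonneg_right hv2 hβpos.le
    rw [div_mul_cancel₀ _ hβpos.ne'] at this
    linarith
  -- corner bound
  have hcorner : ε * α + c * β ≤ u := by
    have htend : Filter.Tendsto (fun δ : ℝ => (ε - δ) * α + (c + δ) * β)
        (nhdsWithin 0 (Set.Ioi 0)) (nhds (ε * α + c * β)) := by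
      have hcont : Continuous fun δ : ℝ => (ε - δ) * α + (c + δ) * β :=
        ((continuous_const.sub continuous_id).mul continuous_const).add
          ((continuous_const.add continuous_id).mul continuous_const)
      have := hcont.tendsto 0
      simp only [sub_zero, add_zero] at this
      exact this.mono_left nhdsWithin_le_nhds
    refine le_of_tendsto htend ?_
    filter_upwards [self_mem_nhdsWithin] with δ hδ
    have hδ0 : (0:ℝ) < δ := hδ
    have hmemU : ((ε - δ, c + δ) : ℝ × ℝ) ∈ (Set.Iio ε) ×ˢ (Set.Ioi c) :=
      Set.mk_mem_prod (Set.mem_Iio.2 (by linarith)) (Set.mem_Ioi.2 (by linarith))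
    have := hfU _ hmemU
    rw [hrepr' (ε - δ) (c + δ)] at this
    exact this.le
  -- generic plan bound
  have hplan2 : ∀ ξv : Fin K → E, (∀ k, ξv k ∈ Ξ) → ∀ lam : ℝ, α = lam * (-β) → β < 0 →
      ∑ k, (h (ξv k) - lam * ‖ξv k - ξs k‖) ≤ K * (c - lam * ε) := by
    intro ξv hv lam hαlam hβneg
    have hmem := point_mem_Bset h ξs ξv hv
    have hfb := hfB _ hmem
    rw [hrepr] at hfb
    set t : ℝ := (K : ℝ)⁻¹ * ∑ k, ‖ξv k - ξs k‖ with htdef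
    set v : ℝ := (K : ℝ)⁻¹ * ∑ k, h (ξv k) with hvdef
    have hfst : ((K : ℝ)⁻¹ • ∑ k, ((‖ξv k - ξs k‖, h (ξv k)) : ℝ × ℝ)).1 = t := by
      rw [Prod.smul_fst, Prod.fst_sum, smul_eq_mul]
    have hsnd : ((K : ℝ)⁻¹ • ∑ k, ((‖ξv k - ξs k‖, h (ξv k)) : ℝ × ℝ)).2 = v := by
      rw [Prod.smul_snd, Prod.snd_sum, smul_eq_mul]
    rw [hfst, hsnd] at hfb
    have hcb := hcorner.trans hfb
    -- (v - c) * (-β) ≤ ((t - ε) * lam) * (-β)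
    have hstep : (v - c) * (-β) ≤ ((t - ε) * lam) * (-β) := by
      rw [hαlam] at hcb
      nlinarith [hcb]
    have hstep2 : v - c ≤ (t - ε) * lam :=
      le_of_mul_le_mul_right hstep (neg_pos.2 hβneg)
    have hKt : (K : ℝ) * t = ∑ k, ‖ξv k - ξs k‖ := by
      rw [htdef, ← mul_assoc, mul_inv_cancel₀ hKpos.ne', one_mul]
    have hKv : (K : ℝ) * v = ∑ k, h (ξv k) := by
      rw [hvdef, ← mul_assoc, mul_inv_cancel₀ hKpos.ne', one_mul]
    have hmulK := mul_le_mul_of_nonneg_left hstep2 hKpos.le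
    rw [Finset.sum_sub_distrib, ← Finset.mul_sum, ← hKt, ← hKv]
    nlinarith [hmulK]
  by_cases hβ0 : β = 0
  · exfalso
    have h1 : u ≤ 0 := by
      rw [hβ0, mul_zero] at hub0
      exact hub0
    have h2 : ε * α ≤ u := by
      rw [hβ0, mul_zero, add_zero] at hcorner
      exact hcorner
    have hεα : 0 ≤ ε * α := mul_nonneg hεpos.le hα
    have h3 := hfU (ε - 1, c + 1)
      (Set.mk_mem_prod (Set.mem_Iio.2 (by linarith)) (Set.mem_Ioi.2 (lt_add_one c)))
    rw [hrepr' (ε - 1) (c + 1), hβ0, mul_zero, add_zero] at h3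
    have hu0 : u = 0 := le_antisymm h1 (hεα.trans h2)
    have hα0 : α = 0 := by
      have hεα0 : ε * α = 0 := le_antisymm (h2.trans h1) hεα
      exact (mul_eq_zero.1 hεα0).resolve_left hεpos.ne'
    rw [hα0, mul_zero, hu0] at h3
    exact lt_irrefl 0 h3
  · have hβneg : β < 0 := lt_of_le_of_ne hβ hβ0
    set lam := α / (-β) with hlamdef
    have hβpos' : (0:ℝ) < -β := neg_pos.2 hβneg
    have hlamnn : 0 ≤ lam := div_nonneg hα hβpos'.le
    have hαlam : α = lam * (-β) := by
      rw [hlamdef, div_mul_cancel₀ _ hβpos'.ne']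
    have hplan3 := fun ξv hv => hplan2 ξv hv lam hαlam hβneg
    -- per-sample sigma bounds
    have hσb : ∀ (k : Fin K) (ξ : E), ξ ∈ Ξ → h ξ - lam * ‖ξ - ξs k‖
        ≤ K * (c - lam * ε) - ∑ j ∈ Finset.univ.erase k, h (ξs j) := by
      intro k ξ hξ
      set ξv : Fin K → E := Function.update ξs k ξ with hξv
      have hv : ∀ j, ξv j ∈ Ξ := fun j => by
        rcases eq_or_ne j k with rfl | hne'
        · simpa [hξv] using hξ
        · simpa [hξv, Function.update_of_ne hne'] using hξs j
      have hp := hplan3 ξv hv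
      rw [← Finset.add_sum_erase _ _ (Finset.mem_univ k)] at hp
      have hterm : ∀ j ∈ Finset.univ.erase k,
          h (ξv j) - lam * ‖ξv j - ξs j‖ = h (ξs j) := fun j hj => by
        rw [hξv, Function.update_of_ne (Finset.ne_of_mem_erase hj)]
        simp
      rw [Finset.sum_congr rfl hterm, hξv, Function.update_self] at hp
      linarith
    have hσ : ∀ k, sigmaSup Ξ h lam (ξs k) ≤
        ((K * (c - lam * ε) - ∑ j ∈ Finset.univ.erase k, h (ξs j) : ℝ) : EReal) := by
      intro k
      refine sSup_le ?_
      rintro s ⟨ξ, hξ, rfl⟩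
      exact EReal.coe_le_coe_iff.2 (hσb k ξ hξ)
    have hnt : ∀ k, sigmaSup Ξ h lam (ξs k) ≠ ⊤ := fun k =>
      ne_top_of_le_ne_top (EReal.coe_ne_top _) (hσ k)
    set sk : Fin K → ℝ := fun k => (sigmaSup Ξ h lam (ξs k)).toReal with hskdef
    -- sum bound
    have hsum : ∀ θ : ℝ, 0 < θ → ∑ k, sk k ≤ K * (c - lam * ε) + θ := by
      intro θ hθ
      have hpick : ∀ k : Fin K, ∃ ξ, ξ ∈ Ξ ∧ sk k - θ / K < h ξ - lam * ‖ξ - ξs k‖ := by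
        intro k
        have hlt : ((sk k - θ / K : ℝ) : EReal) < sigmaSup Ξ h lam (ξs k) := by
          rw [← EReal.coe_toReal (hnt k) (sigmaSup_ne_bot hne h lam (ξs k))]
          exact_mod_cast sub_lt_self _ (by positivity)
        rw [sigmaSup, lt_sSup_iff] at hlt
        obtain ⟨s, ⟨ξ, hξ, rfl⟩, hs⟩ := hlt
        exact ⟨ξ, hξ, by exact_mod_cast hs⟩
      choose ξv hξv hval using hpick
      have hp := hplan3 ξv hξv
      have hlow : ∑ k, (sk k - θ / K) ≤ ∑ k, (h (ξv k) - lam * ‖ξv k - ξs k‖) :=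
        Finset.sum_le_sum fun k _ => (hval k).le
      rw [Finset.sum_sub_distrib] at hlow
      simp only [Finset.sum_const, Finset.card_univ, Fintype.card_fin, nsmul_eq_mul] at hlow
      have hθK : (K : ℝ) * (θ / K) = θ := by field_simp
      linarith
    have hsum' : ∑ k, sk k ≤ K * (c - lam * ε) := by
      by_contra hcon
      push_neg at hcon
      have := hsum ((∑ k, sk k - K * (c - lam * ε)) / 2) (by linarith)
      linarith
    refine le_trans (sInf_le ⟨lam, hlamnn, rfl⟩) ?_
    rw [dualBody_eq_coe hne ξs ε lam h hnt, EReal.coe_le_coe_iff]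
    have hfin : (K : ℝ)⁻¹ * ∑ k, sk k ≤ c - lam * ε := by
      have := mul_le_mul_of_nonneg_left hsum' (by positivity : (0:ℝ) ≤ (K:ℝ)⁻¹)
      rwa [← mul_assoc, inv_mul_cancel₀ hKpos.ne', one_mul] at this
    linarith

theorem duality_main (hL : 0 < L) (hK : 0 < K) {Ξ : Set E} (hne : Ξ.Nonempty)
    (hcl : IsClosed Ξ) (ξs : Fin K → E) (hξs : ∀ k, ξs k ∈ Ξ)
    {ε : ℝ} (hε : 0 ≤ ε) {h : E → ℝ} {hl : Fin L → E → ℝ}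
    (hstruct : IsPointwiseMaxOfConcave Ξ h hl) :
    drWorst Ξ ξs ε h = sInf {r : EReal | ∃ lam : ℝ, 0 ≤ lam ∧ r = drDualBody Ξ ξs ε lam h} := by
  have hΞm : MeasurableSet Ξ := hcl.measurableSet
  have hPD : drWorst Ξ ξs ε h
      ≤ sInf {r : EReal | ∃ lam : ℝ, 0 ≤ lam ∧ r = drDualBody Ξ ξs ε lam h} := by
    refine sSup_le ?_
    rintro r ⟨Q, hQ, hint, rfl⟩
    refine le_sInf ?_
    rintro d ⟨lam, hlam, rfl⟩
    exact weak_duality hK hΞm hne ξs hξs hε h hlam hQ hint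
  refine le_antisymm hPD ?_
  have hP0 : (((K : ℝ)⁻¹ * ∑ k, h (ξs k) : ℝ) : EReal) ≤ drWorst Ξ ξs ε h := by
    refine le_sSup ⟨empiricalMeasure ξs, empirical_mem hK Ξ hΞm ξs hξs hε,
      integrable_empirical ξs hK h, ?_⟩
    rw [integral_empirical ξs hK h]
  rcases eq_or_lt_of_le hε with hε0 | hεpos
  · obtain rfl : (0:ℝ) = ε := hε0
    exact (dual_le_P0 hL hK hne hcl hstruct ξs hξs).trans hP0
  · by_contra hc
    rw [not_le] at hc
    obtain ⟨c, hc1, hc2⟩ := EReal.exists_between_coe_real hc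
    by_cases hplan : (Bset Ξ h ξs ∩ ((Set.Iio ε) ×ˢ (Set.Ioi c))).Nonempty
    · obtain ⟨b, hbB, hbU⟩ := hplan
      have hb1 : b.1 < ε := hbU.1
      have hb2 : c < b.2 := hbU.2
      obtain ⟨Q, hQmem, hQint, hQval⟩ := primal_ge_of_mem_B hK hΞm ξs hξs hbB hb1.le
      have hle : ((b.2 : ℝ) : EReal) ≤ drWorst Ξ ξs ε h :=
        le_sSup ⟨Q, hQmem, hQint, by rw [hQval]⟩
      have : (c : EReal) < (c : EReal) :=
        (lt_of_lt_of_le (by exact_mod_cast hb2) hle).trans hc1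
      exact lt_irrefl _ this
    · have := dual_le_of_no_plan hK hne ξs hξs hεpos hplan
      exact absurd (hc2.trans_le this) (lt_irrefl _)

end MainE

/-- strong duality for the Wasserstein distributionally robust
expectation, and its consequence for the distributionally robust game. -/
theorem dr_strong_duality {p L K : ℕ} (hL : 0 < L) (hK : 0 < K)
    (Ξ : Set (EuclideanSpace ℝ (Fin p)))
    (hne : Ξ.Nonempty) (hconv : Convex ℝ Ξ) (hcl : IsClosed Ξ)
    (ξs : Fin K → EuclideanSpace ℝ (Fin p)) (hξs : ∀ k, ξs k ∈ Ξ)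
    (ε : ℝ) (hε : 0 ≤ ε)
    (h : EuclideanSpace ℝ (Fin p) → ℝ)
    (hl : Fin L → EuclideanSpace ℝ (Fin p) → ℝ)
    (hstruct : IsPointwiseMaxOfConcave Ξ h hl) :
    -- primal worst-case expectation equals the dual value
    (drWorst Ξ ξs ε h =
        sInf {r : EReal | ∃ lam : ℝ, 0 ≤ lam ∧ r = drDualBody Ξ ξs ε lam h}) ∧
      -- consequently, for a game cost `H x ξ` of the above form for each decision `x`,
      -- the agent's best distributionally robust value admits the dual reformulation
      (∀ {n : ℕ} (Xi : Set (EuclideanSpace ℝ (Fin n)))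
          (H : EuclideanSpace ℝ (Fin n) → EuclideanSpace ℝ (Fin p) → ℝ)
          (Hl : EuclideanSpace ℝ (Fin n) → Fin L → EuclideanSpace ℝ (Fin p) → ℝ),
        (∀ x ∈ Xi, IsPointwiseMaxOfConcave Ξ (H x) (Hl x)) →
        sInf {r : EReal | ∃ x ∈ Xi, r = drWorst Ξ ξs ε (H x)} =
          sInf {r : EReal | ∃ x ∈ Xi, ∃ lam : ℝ, 0 ≤ lam ∧
            r = drDualBody Ξ ξs ε lam (H x)}) := by
  constructor
  · exact duality_main hL hK hne hcl ξs hξs hε hstruct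
  · intro n Xi H Hl hstructs
    have key : ∀ x ∈ Xi, drWorst Ξ ξs ε (H x)
        = sInf {r : EReal | ∃ lam : ℝ, 0 ≤ lam ∧ r = drDualBody Ξ ξs ε lam (H x)} :=
      fun x hx => duality_main hL hK hne hcl ξs hξs hε (hstructs x hx)
    apply le_antisymm
    · refine le_sInf ?_
      rintro r ⟨x, hx, lam, hlam, rfl⟩
      refine le_trans (sInf_le ⟨x, hx, rfl⟩) ?_
      rw [key x hx]
      exact sInf_le ⟨lam, hlam, rfl⟩
    · refine le_sInf ?_
      rintro r ⟨x, hx, rfl⟩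
      rw [key x hx]
      refine le_sInf ?_
      rintro d ⟨lam, hlam, rfl⟩
      exact sInf_le ⟨x, hx, lam, hlam, rfl⟩
end

section
/- Let Ξ ⊆ ℝ^p be nonempty, convex and closed, let g : Ξ → ℝ ∪ {−∞} be such that −g is convex, proper and lower semicontinuous on Ξ and g is not identically −∞, let λ ≥ 0 and ξ̂ ∈ ℝ^p. Then, with values in ℝ ∪ {±∞}, sup_{ξ ∈ Ξ} ( g(ξ) − λ·‖ξ − ξ̂‖ ) = inf_{z ∈ ℝ^p, ‖z‖ ≤ λ} sup_{ξ ∈ Ξ} ( g(ξ) − ⟨z, ξ − ξ̂⟩ ), where ‖·‖ is the Euclidean norm (so that ‖·‖ is its own dual norm and λ‖ξ − ξ̂‖ = max_{‖z‖ ≤ λ} ⟨z, ξ − ξ̂⟩). -/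
open RealInnerProductSpace

set_option maxHeartbeats 1000000 in
/-- min–sup exchange for the dualized Wasserstein cost. For a
nonempty, convex and closed set `Ξ ⊆ ℝ^p`, a concave, proper, upper semicontinuous
function `g : Ξ → ℝ ∪ {−∞}` (i.e. `−g` is convex, proper and lower semicontinuous),
`λ ≥ 0` and a point `ξ̂`, one has, with values in `ℝ ∪ {±∞}`,
`sup_{ξ ∈ Ξ} (g(ξ) − λ‖ξ − ξ̂‖) = inf_{‖z‖ ≤ λ} sup_{ξ ∈ Ξ} (g(ξ) − ⟨z, ξ − ξ̂⟩)`. -/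
theorem min_sup_exchange {p : ℕ}
    (Ξ : Set (EuclideanSpace ℝ (Fin p)))
    (hne : Ξ.Nonempty) (hconv : Convex ℝ Ξ) (hcl : IsClosed Ξ)
    (g : EuclideanSpace ℝ (Fin p) → EReal)
    -- g takes values in ℝ ∪ {−∞}
    (hgtop : ∀ ξ, g ξ ≠ ⊤)
    -- −g is proper: g is not identically −∞ on Ξ
    (hproper : ∃ ξ ∈ Ξ, g ξ ≠ ⊥)
    -- −g is convex on Ξ, i.e. g is concave on Ξ
    (hconc : ∀ ξ₁ ∈ Ξ, ∀ ξ₂ ∈ Ξ, ∀ a b : ℝ, 0 ≤ a → 0 ≤ b → a + b = 1 →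
      (a : EReal) * g ξ₁ + (b : EReal) * g ξ₂ ≤ g (a • ξ₁ + b • ξ₂))
    -- −g is lower semicontinuous on Ξ
    (hlsc : LowerSemicontinuousOn (fun ξ => -(g ξ)) Ξ)
    (lam : ℝ) (hlam : 0 ≤ lam) (ξhat : EuclideanSpace ℝ (Fin p)) :
    sSup {r : EReal | ∃ ξ ∈ Ξ, r = g ξ - ((lam * ‖ξ - ξhat‖ : ℝ) : EReal)} =
      sInf {r : EReal | ∃ z : EuclideanSpace ℝ (Fin p), ‖z‖ ≤ lam ∧
        r = sSup {s : EReal | ∃ ξ ∈ Ξ, s = g ξ - ((⟪z, ξ - ξhat⟫ : ℝ) : EReal)}} := by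
  classical
  set A : Set EReal := {r : EReal | ∃ ξ ∈ Ξ, r = g ξ - ((lam * ‖ξ - ξhat‖ : ℝ) : EReal)}
    with hAdef
  -- easy direction
  have hle : sSup A ≤ sInf {r : EReal | ∃ z : (EuclideanSpace ℝ (Fin p)), ‖z‖ ≤ lam ∧
      r = sSup {s : EReal | ∃ ξ ∈ Ξ, s = g ξ - ((⟪z, ξ - ξhat⟫ : ℝ) : EReal)}} := by
    apply le_sInf
    rintro r ⟨z, hz, rfl⟩
    apply sSup_le
    rintro r ⟨ξ, hξ, rfl⟩
    refine le_sSup_of_le ⟨ξ, hξ, rfl⟩ ?_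
    refine EReal.sub_le_sub le_rfl ?_
    rw [EReal.coe_le_coe_iff]
    calc ⟪z, ξ - ξhat⟫ ≤ ‖z‖ * ‖ξ - ξhat‖ := real_inner_le_norm z _
      _ ≤ lam * ‖ξ - ξhat‖ := mul_le_mul_of_nonneg_right hz (norm_nonneg _)
  refine le_antisymm hle ?_
  rcases eq_or_ne (sSup A) ⊤ with htop | htop
  · rw [htop]; exact le_top
  obtain ⟨ξ₀, hξ₀, hg₀⟩ := hproper
  obtain ⟨r₀, hr₀⟩ : ∃ r : ℝ, g ξ₀ = (r : EReal) :=
    ⟨(g ξ₀).toReal, (EReal.coe_toReal (hgtop ξ₀) hg₀).symm⟩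
  have hbot : sSup A ≠ ⊥ := by
    have hmem : ((r₀ - lam * ‖ξ₀ - ξhat‖ : ℝ) : EReal) ∈ A :=
      ⟨ξ₀, hξ₀, by rw [hr₀, EReal.coe_sub]⟩
    intro h
    exact (EReal.coe_ne_bot _) (le_bot_iff.mp (h ▸ le_sSup hmem))
  obtain ⟨s, hs⟩ : ∃ s : ℝ, sSup A = (s : EReal) :=
    ⟨(sSup A).toReal, (EReal.coe_toReal htop hbot).symm⟩
  -- the separation argument
  set U : Set ((EuclideanSpace ℝ (Fin p)) × ℝ) := {q | lam * ‖q.1‖ < q.2} with hUdef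
  set K : Set ((EuclideanSpace ℝ (Fin p)) × ℝ) := {q | ∃ ξ ∈ Ξ, q.1 = ξ - ξhat ∧ ((q.2 + s : ℝ) : EReal) ≤ g ξ}
    with hKdef
  have hUopen : IsOpen U := by
    have : U = {q : (EuclideanSpace ℝ (Fin p)) × ℝ | lam * ‖q.1‖ < q.2} := rfl
    exact isOpen_lt (Continuous.mul continuous_const continuous_fst.norm) continuous_snd
  have hUconv : Convex ℝ U := by
    rintro ⟨x₁, t₁⟩ h1 ⟨x₂, t₂⟩ h2 a b ha hb hab
    simp only [hUdef, Set.mem_setOf_eq, Prod.smul_mk, Prod.mk_add_mk, smul_eq_mul] at *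
    have hn : ‖a • x₁ + b • x₂‖ ≤ a * ‖x₁‖ + b * ‖x₂‖ := by
      calc ‖a • x₁ + b • x₂‖ ≤ ‖a • x₁‖ + ‖b • x₂‖ := norm_add_le _ _
        _ = a * ‖x₁‖ + b * ‖x₂‖ := by
            rw [norm_smul, norm_smul, Real.norm_eq_abs, Real.norm_eq_abs,
              abs_of_nonneg ha, abs_of_nonneg hb]
    have hmul : lam * ‖a • x₁ + b • x₂‖ ≤ a * (lam * ‖x₁‖) + b * (lam * ‖x₂‖) := by
      nlinarith [norm_nonneg (a • x₁ + b • x₂)]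
    rcases ha.lt_or_eq with ha' | ha'
    · nlinarith
    · have hb1 : b = 1 := by linarith
      nlinarith
  have hKconv : Convex ℝ K := by
    rintro ⟨x₁, t₁⟩ ⟨ξ₁, hξ₁, hx₁, ht₁⟩ ⟨x₂, t₂⟩ ⟨ξ₂, hξ₂, hx₂, ht₂⟩ a b ha hb hab
    refine ⟨a • ξ₁ + b • ξ₂, hconv hξ₁ hξ₂ ha hb hab, ?_, ?_⟩
    · show a • x₁ + b • x₂ = a • ξ₁ + b • ξ₂ - ξhat
      have key : a • (ξ₁ - ξhat) + b • (ξ₂ - ξhat)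
          = a • ξ₁ + b • ξ₂ - (a + b) • ξhat := by module
      rw [show x₁ = ξ₁ - ξhat from hx₁, show x₂ = ξ₂ - ξhat from hx₂, key, hab, one_smul]
    · show ((a * t₁ + b * t₂ + s : ℝ) : EReal) ≤ g (a • ξ₁ + b • ξ₂)
      have h1 : ((a * (t₁ + s) : ℝ) : EReal) ≤ (a : EReal) * g ξ₁ := by
        rw [EReal.coe_mul]
        exact mul_le_mul_of_nonneg_left ht₁ (by exact_mod_cast ha)
      have h2 : ((b * (t₂ + s) : ℝ) : EReal) ≤ (b : EReal) * g ξ₂ := by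
        rw [EReal.coe_mul]
        exact mul_le_mul_of_nonneg_left ht₂ (by exact_mod_cast hb)
      have heq : (a * t₁ + b * t₂ + s : ℝ) = a * (t₁ + s) + b * (t₂ + s) := by
        linear_combination s * hab.symm
      calc ((a * t₁ + b * t₂ + s : ℝ) : EReal)
          = ((a * (t₁ + s) : ℝ) : EReal) + ((b * (t₂ + s) : ℝ) : EReal) := by
            rw [← EReal.coe_add, heq]
        _ ≤ (a : EReal) * g ξ₁ + (b : EReal) * g ξ₂ := add_le_add h1 h2
        _ ≤ g (a • ξ₁ + b • ξ₂) := hconc ξ₁ hξ₁ ξ₂ hξ₂ a b ha hb hab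
  have hdisj : Disjoint U K := by
    rw [Set.disjoint_left]
    rintro ⟨x, t⟩ hU ⟨ξ, hξ, hx, ht⟩
    simp only [hUdef, Set.mem_setOf_eq] at hU
    have hub : g ξ - ((lam * ‖ξ - ξhat‖ : ℝ) : EReal) ≤ (s : EReal) :=
      hs ▸ le_sSup ⟨ξ, hξ, rfl⟩
    have hchain : ((t + s - lam * ‖ξ - ξhat‖ : ℝ) : EReal) ≤ (s : EReal) := by
      calc ((t + s - lam * ‖ξ - ξhat‖ : ℝ) : EReal)
          = ((t + s : ℝ) : EReal) - ((lam * ‖ξ - ξhat‖ : ℝ) : EReal) := EReal.coe_sub _ _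
        _ ≤ g ξ - ((lam * ‖ξ - ξhat‖ : ℝ) : EReal) := EReal.sub_le_sub ht le_rfl
        _ ≤ (s : EReal) := hub
    rw [EReal.coe_le_coe_iff] at hchain
    rw [show x = ξ - ξhat from hx] at hU
    linarith
  obtain ⟨f, u, hfU, hfK⟩ := geometric_hahn_banach_open hUconv hUopen hKconv hdisj
  set c : ℝ := f ((0 : (EuclideanSpace ℝ (Fin p))), (1 : ℝ)) with hcdef
  set φ : (EuclideanSpace ℝ (Fin p)) →L[ℝ] ℝ := f.comp (ContinuousLinearMap.inl ℝ (EuclideanSpace ℝ (Fin p)) ℝ) with hφdef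
  have hf : ∀ (x : (EuclideanSpace ℝ (Fin p))) (t : ℝ), f (x, t) = φ x + t * c := by
    intro x t
    have hxt : ((x, t) : (EuclideanSpace ℝ (Fin p)) × ℝ) = (x, (0 : ℝ)) + t • ((0 : (EuclideanSpace ℝ (Fin p))), (1 : ℝ)) := by
      simp [Prod.ext_iff]
    rw [hxt, map_add, map_smul]
    simp [hφdef, hcdef, smul_eq_mul]
  have hfU' : ∀ (x : (EuclideanSpace ℝ (Fin p))) (t : ℝ), lam * ‖x‖ < t → φ x + t * c < u := by
    intro x t h
    have := hfU (x, t) h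
    rwa [hf] at this
  have hfK' : ∀ ξ ∈ Ξ, ∀ t : ℝ, ((t + s : ℝ) : EReal) ≤ g ξ → u ≤ φ (ξ - ξhat) + t * c := by
    intro ξ hξ t h
    have := hfK (ξ - ξhat, t) ⟨ξ, hξ, rfl, h⟩
    rwa [hf] at this
  have hc0 : c ≤ 0 := by
    by_contra h
    push_neg at h
    have hmem : lam * ‖(0 : (EuclideanSpace ℝ (Fin p)))‖ < (|u| + 1) / c := by
      rw [norm_zero, mul_zero]
      positivity
    have := hfU' 0 ((|u| + 1) / c) hmem
    rw [map_zero, zero_add, div_mul_cancel₀ _ h.ne'] at this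
    have := le_abs_self u
    linarith
  have hcneg : c < 0 := by
    rcases hc0.lt_or_eq with h | h
    · exact h
    · exfalso
      have hφlt : ∀ x : (EuclideanSpace ℝ (Fin p)), φ x < u := by
        intro x
        have := hfU' x (lam * ‖x‖ + 1) (by linarith)
        rw [h, mul_zero, add_zero] at this
        exact this
      have hK0 : u ≤ φ (ξ₀ - ξhat) + (r₀ - s) * c :=
        hfK' ξ₀ hξ₀ (r₀ - s) (by rw [hr₀]; norm_num)
      rw [h, mul_zero, add_zero] at hK0
      exact absurd (hφlt (ξ₀ - ξhat)) (not_lt.mpr hK0)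
  have hd : (0 : ℝ) < -c := by linarith
  have hUlim : ∀ x : (EuclideanSpace ℝ (Fin p)), φ x + lam * ‖x‖ * c ≤ u := by
    intro x
    by_contra h
    push_neg at h
    set ε : ℝ := φ x + lam * ‖x‖ * c - u with hεdef
    have hε : 0 < ε := by simp only [hεdef]; linarith
    have hlt := hfU' x (lam * ‖x‖ + ε / (-c)) (by
      have : 0 < ε / (-c) := div_pos hε hd
      linarith)
    rw [add_mul] at hlt
    have hεc : ε / (-c) * c = -ε := by rw [div_mul_eq_mul_div, div_eq_iff hd.ne']; ring
    rw [hεc] at hlt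
    simp only [hεdef] at hlt
    linarith
  have hu0 : 0 ≤ u := by
    have := hUlim 0
    rw [map_zero, norm_zero, mul_zero, zero_mul, add_zero] at this
    exact this
  obtain ⟨z, hzx⟩ : ∃ z : EuclideanSpace ℝ (Fin p),
      ∀ x : EuclideanSpace ℝ (Fin p), ⟪z, x⟫ = φ x / (-c) := by
    refine ⟨(InnerProductSpace.toDual ℝ (EuclideanSpace ℝ (Fin p))).symm
      ((-c)⁻¹ • (φ : (EuclideanSpace ℝ (Fin p)) →L[ℝ] ℝ)), fun x => ?_⟩
    rw [InnerProductSpace.toDual_symm_apply]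
    simp [div_eq_inv_mul]
  have key : ∀ x : (EuclideanSpace ℝ (Fin p)), ⟪z, x⟫ ≤ u / (-c) + lam * ‖x‖ := by
    intro x
    have h1 := hUlim x
    rw [hzx]
    rw [div_le_iff₀ hd, add_mul, div_mul_cancel₀ _ hd.ne']
    nlinarith
  have hznorm : ‖z‖ ≤ lam := by
    by_contra h
    push_neg at h
    have hz0 : 0 < ‖z‖ := lt_of_le_of_lt hlam h
    have key2 : ∀ r : ℝ, 0 < r → ‖z‖ ^ 2 ≤ u / (-c) / r + lam * ‖z‖ := by
      intro r hr
      have hk := key (r • z)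
      rw [real_inner_smul_right, real_inner_self_eq_norm_sq, norm_smul,
        Real.norm_eq_abs, abs_of_pos hr] at hk
      rw [← mul_le_mul_iff_right₀ hr, mul_add, mul_div_cancel₀ _ hr.ne']
      nlinarith
    set δ : ℝ := (‖z‖ - lam) * ‖z‖ with hδdef
    have hδ : 0 < δ := mul_pos (by linarith) hz0
    set r : ℝ := u / (-c) / δ + 1 with hrdef
    have hr0 : 0 < r := by
      have : 0 ≤ u / (-c) / δ := div_nonneg (div_nonneg hu0 hd.le) hδ.le
      simp only [hrdef]; linarith
    have hk2 := key2 r hr0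
    have hsmall : u / (-c) / r < δ := by
      rw [div_lt_iff₀ hr0]
      have : δ * r = u / (-c) + δ := by
        simp only [hrdef]
        have : δ * (u / -c / δ) = u / -c := mul_div_cancel₀ _ hδ.ne'
        ring_nf
        ring_nf at this
        linarith
      rw [this]
      linarith
    nlinarith
  have hfinal : ∀ ξ ∈ Ξ, g ξ - ((⟪z, ξ - ξhat⟫ : ℝ) : EReal) ≤ (s : EReal) := by
    intro ξ hξ
    rcases eq_or_ne (g ξ) ⊥ with hb | hb
    · rw [hb, EReal.bot_sub]; exact bot_le
    obtain ⟨r, hr⟩ : ∃ r : ℝ, g ξ = (r : EReal) :=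
      ⟨(g ξ).toReal, (EReal.coe_toReal (hgtop ξ) hb).symm⟩
    have hK := hfK' ξ hξ (r - s) (by rw [hr]; norm_num)
    have h2 : r - s ≤ ⟪z, ξ - ξhat⟫ := by
      rw [hzx, le_div_iff₀ hd]
      nlinarith
    rw [hr, ← EReal.coe_sub, EReal.coe_le_coe_iff]
    linarith
  refine sInf_le_of_le ⟨z, hznorm, rfl⟩ ?_
  rw [hs]
  apply sSup_le
  rintro r ⟨ξ, hξ, rfl⟩
  exact hfinal ξ hξ
end

section
/- Let Ξ = {ξ ∈ ℝ^p : Cξ ≤ d} be a nonempty polytope, where C ∈ ℝ^{m×p} and d ∈ ℝ^m, let a ∈ ℝ^p, b ∈ ℝ, λ ≥ 0, s ∈ ℝ, and let ξ̂ ∈ Ξ be a sample point. Then sup_{ξ ∈ Ξ} ( aᵀξ + b − λ·‖ξ − ξ̂‖ ) ≤ s if and only if there exists γ ∈ ℝ^m with γ ≥ 0 (componentwise) such that b + aᵀξ̂ + γᵀ(d − Cξ̂) ≤ s and ‖Cᵀγ − a‖ ≤ λ, where ‖·‖ denotes the Euclidean norm. -/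
open RealInnerProductSpace Finset Pointwise

lemma cone_caratheodory {ι V : Type*} [DecidableEq ι] [AddCommGroup V] [Module ℝ V]
    (v : ι → V) (s : Finset ι) (c : ι → ℝ) (hc : ∀ i ∈ s, 0 ≤ c i) :
    ∃ (s' : Finset ι) (c' : ι → ℝ), s' ⊆ s ∧ (∀ i, 0 ≤ c' i) ∧
      ∑ i ∈ s', c' i • v i = ∑ i ∈ s, c i • v i ∧
      LinearIndependent ℝ (fun i : s' => v (i : ι)) := by
  revert c
  induction s using Finset.strongInductionOn with
  | _ s IH =>
  intro c hc
  by_cases hli : LinearIndependent ℝ (fun i : s => v (i : ι))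
  · refine ⟨s, fun i => if i ∈ s then c i else 0, subset_rfl, ?_, ?_, hli⟩
    · intro i
      by_cases h : i ∈ s
      · simpa [h] using hc i h
      · simp [h]
    · apply Finset.sum_congr rfl
      intro i hi; simp [hi]
  · -- get a dependence relation
    obtain ⟨g, hg0, i1, hgi1⟩ := Fintype.not_linearIndependent_iff.mp hli
    -- extend g to ι
    set w : ι → ℝ := fun i => if h : i ∈ s then g ⟨i, h⟩ else 0 with hw
    have hwsum : ∑ i ∈ s, w i • v i = 0 := by
      rw [← Finset.sum_coe_sort s (fun i => w i • v i)]
      convert hg0 using 1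
      apply Finset.sum_congr rfl
      intro i _
      simp [hw, i.2]
    have hwne : ∃ i ∈ s, w i ≠ 0 := ⟨i1, i1.2, by simp [hw, i1.2, hgi1]⟩
    -- WLOG there is a positive coordinate
    have key : ∀ w : ι → ℝ, (∑ i ∈ s, w i • v i = 0) → (∃ i ∈ s, 0 < w i) →
        ∃ (s' : Finset ι) (c' : ι → ℝ), s' ⊆ s ∧ (∀ i, 0 ≤ c' i) ∧
          ∑ i ∈ s', c' i • v i = ∑ i ∈ s, c i • v i ∧
          LinearIndependent ℝ (fun i : s' => v (i : ι)) := by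
      intro w hwsum hpos
      classical
      set T : Finset ι := s.filter (fun i => 0 < w i) with hT
      have hTne : T.Nonempty := by
        obtain ⟨i, hi, hwi⟩ := hpos
        exact ⟨i, by simp [hT, hi, hwi]⟩
      set θ : ℝ := T.inf' hTne (fun i => c i / w i) with hθ
      obtain ⟨i0, hi0T, hi0⟩ := Finset.exists_mem_eq_inf' hTne (fun i => c i / w i)
      have hi0s : i0 ∈ s := (Finset.mem_filter.mp hi0T).1
      have hwi0 : 0 < w i0 := (Finset.mem_filter.mp hi0T).2
      have hθ0 : 0 ≤ θ := by
        apply Finset.le_inf'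
        intro i hiT
        have := Finset.mem_filter.mp hiT
        exact div_nonneg (hc i this.1) this.2.le
      set c'' : ι → ℝ := fun i => c i - θ * w i with hc''
      have hc''nn : ∀ i ∈ s, 0 ≤ c'' i := by
        intro i hi
        by_cases hwi : 0 < w i
        · have hiT : i ∈ T := Finset.mem_filter.mpr ⟨hi, hwi⟩
          have := Finset.inf'_le (fun i => c i / w i) hiT
          rw [← hθ] at this
          have := (le_div_iff₀ hwi).mp this
          simpa [hc''] using this
        · push_neg at hwi
          have : 0 ≤ -(θ * w i) := by
            have := mul_nonneg hθ0 (neg_nonneg.mpr hwi)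
            simpa [mul_comm] using this
          have := add_nonneg (hc i hi) this
          simpa [hc''] using this
      have hc''i0 : c'' i0 = 0 := by
        have hθval : θ = c i0 / w i0 := hθ.trans hi0
        simp only [hc'', hθval]
        field_simp
        ring
      have hc''sum : ∑ i ∈ s, c'' i • v i = ∑ i ∈ s, c i • v i := by
        simp only [hc'', sub_smul, Finset.sum_sub_distrib, mul_smul]
        rw [← Finset.smul_sum, hwsum, smul_zero, sub_zero]
      have herase : ∑ i ∈ s.erase i0, c'' i • v i = ∑ i ∈ s, c i • v i := by
        rw [← hc''sum, ← Finset.add_sum_erase s _ hi0s, hc''i0, zero_smul, zero_add]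
      obtain ⟨s', c', hs', hc', hsum', hli'⟩ :=
        IH (s.erase i0) (Finset.erase_ssubset hi0s) c''
          (fun i hi => hc''nn i (Finset.mem_of_mem_erase hi))
      exact ⟨s', c', hs'.trans (Finset.erase_subset _ _), hc', by rw [hsum', herase], hli'⟩
    by_cases hposs : ∃ i ∈ s, 0 < w i
    · exact key w hwsum hposs
    · apply key (-w)
      · simpa [neg_smul] using congrArg Neg.neg hwsum
      · push_neg at hposs
        obtain ⟨i, hi, hwi⟩ := hwne
        exact ⟨i, hi, by simpa using lt_of_le_of_ne (hposs i hi) hwi⟩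

lemma cone_isClosed {ι F : Type*} [Fintype ι] [DecidableEq ι] [NormedAddCommGroup F]
    [NormedSpace ℝ F] [FiniteDimensional ℝ F] (v : ι → F) :
    IsClosed {x : F | ∃ c : ι → ℝ, (∀ i, 0 ≤ c i) ∧ x = ∑ i, c i • v i} := by
  classical
  have key : {x : F | ∃ c : ι → ℝ, (∀ i, 0 ≤ c i) ∧ x = ∑ i, c i • v i} =
      ⋃ (s : {s : Finset ι // LinearIndependent ℝ (fun i : s => v (i : ι))}),
        ((fun c : ((s : Finset ι) : Type _) → ℝ => ∑ i, c i • v (i : ι)) ''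
          {c | ∀ i, 0 ≤ c i}) := by
    ext x
    simp only [Set.mem_setOf_eq, Set.mem_iUnion, Set.mem_image]
    constructor
    · rintro ⟨c, hc, rfl⟩
      obtain ⟨s', c', _, hc', hsum, hli⟩ :=
        cone_caratheodory v Finset.univ c (fun i _ => hc i)
      refine ⟨⟨s', hli⟩, fun i => c' i, fun i => hc' i, ?_⟩
      rw [Finset.sum_coe_sort s' (fun i => c' i • v i), hsum]
    · rintro ⟨⟨s, hli⟩, cc, hcc, rfl⟩
      refine ⟨fun i => if h : i ∈ s then cc ⟨i, h⟩ else 0, ?_, ?_⟩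
      · intro i
        by_cases h : i ∈ s
        · simpa [h] using hcc ⟨i, h⟩
        · simp [h]
      · rw [← Finset.sum_subset (Finset.subset_univ s)
            (by intro i _ hi; simp [hi])]
        rw [← Finset.sum_coe_sort s (fun i => (if h : i ∈ s then cc ⟨i, h⟩ else 0) • v i)]
        apply Finset.sum_congr rfl
        intro i _
        congr 1
        simp [i.2]
  rw [key]
  apply isClosed_iUnion_of_finite
  rintro ⟨s, hli⟩
  set L : (((s : Finset ι) : Type _) → ℝ) →ₗ[ℝ] F :=
    { toFun := fun c => ∑ i, c i • v (i : ι)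
      map_add' := by
        intro x y
        simp [add_smul, Finset.sum_add_distrib]
      map_smul' := by
        intro r x
        simp [smul_smul, Finset.smul_sum] } with hL
  have hker : LinearMap.ker L = ⊥ := by
    rw [LinearMap.ker_eq_bot']
    intro g hg
    have := Fintype.linearIndependent_iff.mp hli g hg
    funext i
    exact this i
  have hemb := LinearMap.isClosedEmbedding_of_injective hker
  have hclosed : IsClosed {c : ((s : Finset ι) : Type _) → ℝ | ∀ i, 0 ≤ c i} := by
    have : {c : ((s : Finset ι) : Type _) → ℝ | ∀ i, 0 ≤ c i} =
        ⋂ i, (fun c : ((s : Finset ι) : Type _) → ℝ => c i) ⁻¹' Set.Ici 0 := by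
      ext c; simp [Set.mem_iInter]
    rw [this]
    exact isClosed_iInter fun i => IsClosed.preimage (continuous_apply i) isClosed_Ici
  exact hemb.isClosedMap _ hclosed

lemma ray_bound {u0 : ℝ} (hu0 : 0 < u0) {q : ℝ} (h : ∀ r : ℝ, 0 ≤ r → r * q < u0) :
    q ≤ 0 := by
  by_contra hq
  push_neg at hq
  have := h (u0 / q) (by positivity)
  rw [div_mul_cancel₀ _ hq.ne'] at this
  exact lt_irrefl _ this


set_option maxHeartbeats 1000000 in
/-- dual reformulation of the worst-case constraint over a polytopic
support set. Let `Ξ = {ξ : Cξ ≤ d}` be a nonempty polytope (with rows `C j` of the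
matrix `C`), let `ξhat ∈ Ξ` be a sample point, `λ ≥ 0` and `s ∈ ℝ`. Then
`sup_{ξ ∈ Ξ} (aᵀξ + b − λ‖ξ − ξhat‖) ≤ s` if and only if there exists `γ ≥ 0` with
`b + aᵀξhat + γᵀ(d − Cξhat) ≤ s` and `‖Cᵀγ − a‖ ≤ λ`. -/
theorem polytopic_worst_case_constraint_duality {p m : ℕ}
    (C : Fin m → EuclideanSpace ℝ (Fin p)) (d : Fin m → ℝ)
    (a : EuclideanSpace ℝ (Fin p)) (b : ℝ) (lam : ℝ) (hlam : 0 ≤ lam) (s : ℝ)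
    (ξhat : EuclideanSpace ℝ (Fin p)) (hξhat : ∀ j, ⟪C j, ξhat⟫ ≤ d j) :
    (∀ ξ : EuclideanSpace ℝ (Fin p), (∀ j, ⟪C j, ξ⟫ ≤ d j) →
        ⟪a, ξ⟫ + b - lam * ‖ξ - ξhat‖ ≤ s) ↔
      (∃ γ : Fin m → ℝ, (∀ j, 0 ≤ γ j) ∧
        b + ⟪a, ξhat⟫ + ∑ j, γ j * (d j - ⟪C j, ξhat⟫) ≤ s ∧
        ‖(∑ j, γ j • C j) - a‖ ≤ lam) := by
  classical
  set e : Fin m → ℝ := fun j => d j - ⟪C j, ξhat⟫ with he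
  have he0 : ∀ j, 0 ≤ e j := fun j => sub_nonneg.mpr (hξhat j)
  set t : ℝ := s - b - ⟪a, ξhat⟫ with ht
  constructor
  · -- hard direction
    intro H
    -- recentered hypothesis
    have H' : ∀ ζ : (EuclideanSpace ℝ (Fin p)), (∀ j, ⟪C j, ζ⟫ ≤ e j) → ⟪a, ζ⟫ - lam * ‖ζ‖ ≤ t := by
      intro ζ hζ
      have hfeas : ∀ j, ⟪C j, ξhat + ζ⟫ ≤ d j := by
        intro j
        rw [inner_add_right]
        have := hζ j
        rw [he] at this
        simp only at this
        linarith
      have := H (ξhat + ζ) hfeas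
      rw [inner_add_right, add_sub_cancel_left] at this
      rw [ht]
      linarith
    have ht0 : 0 ≤ t := by
      have := H' 0 (by intro j; rw [inner_zero_right]; exact he0 j)
      simpa using this
    -- the dual feasible set
    set v : (Fin m ⊕ Unit) → (EuclideanSpace ℝ (Fin p)) × ℝ :=
      Sum.elim (fun j => (C j, e j)) (fun _ => ((0 : (EuclideanSpace ℝ (Fin p))), (1 : ℝ))) with hv
    set K : Set ((EuclideanSpace ℝ (Fin p)) × ℝ) :=
      {x | ∃ c : (Fin m ⊕ Unit) → ℝ, (∀ i, 0 ≤ c i) ∧ x = ∑ i, c i • v i} with hK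
    set B : Set ((EuclideanSpace ℝ (Fin p)) × ℝ) := (fun u : (EuclideanSpace ℝ (Fin p)) => (u, (0 : ℝ))) '' Metric.closedBall 0 lam with hB
    set D : Set ((EuclideanSpace ℝ (Fin p)) × ℝ) := B + K with hD
    have hKclosed : IsClosed K := cone_isClosed v
    have hKconvex : Convex ℝ K := by
      intro x hx y hy α β hα hβ hαβ
      obtain ⟨cx, hcx, rfl⟩ := hx
      obtain ⟨cy, hcy, rfl⟩ := hy
      refine ⟨fun i => α * cx i + β * cy i,
        fun i => add_nonneg (mul_nonneg hα (hcx i)) (mul_nonneg hβ (hcy i)), ?_⟩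
      rw [Finset.smul_sum, Finset.smul_sum, ← Finset.sum_add_distrib]
      apply Finset.sum_congr rfl
      intro i _
      rw [add_smul, smul_smul, smul_smul, mul_smul, mul_smul]
    have hBcompact : IsCompact B :=
      ((isCompact_closedBall (0 : (EuclideanSpace ℝ (Fin p))) lam).image (by fun_prop))
    have hBconvex : Convex ℝ B := by
      have : B = (LinearMap.inl ℝ (EuclideanSpace ℝ (Fin p)) ℝ) '' Metric.closedBall 0 lam := rfl
      rw [this]
      exact (convex_closedBall _ _).linear_image _
    have hDclosed : IsClosed D := hKclosed.add_left_of_isCompact hBcompact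
    have hDconvex : Convex ℝ D := hBconvex.add hKconvex
    -- component formula for elements of K
    have hKsum : ∀ c : (Fin m ⊕ Unit) → ℝ,
        ∑ i, c i • v i = (∑ j, c (Sum.inl j) • C j,
          (∑ j, c (Sum.inl j) * e j) + c (Sum.inr ())) := by
      intro c
      rw [Fintype.sum_sum_type]
      simp only [hv, Sum.elim_inl, Sum.elim_inr, Prod.smul_mk, smul_eq_mul, smul_zero, mul_one]
      rw [Prod.ext_iff]
      constructor
      · simp [Prod.fst_sum]
      · simp [Prod.snd_sum]
    -- main claim : (a, t) ∈ D
    have hmem : (a, t) ∈ D := by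
      by_contra hnot
      obtain ⟨f, u0, hfD, hfx⟩ := geometric_hahn_banach_closed_point hDconvex hDclosed hnot
      set ζ : (EuclideanSpace ℝ (Fin p)) := (InnerProductSpace.toDual ℝ (EuclideanSpace ℝ (Fin p))).symm
        (f.comp (ContinuousLinearMap.inl ℝ (EuclideanSpace ℝ (Fin p)) ℝ)) with hζ
      have hζapp : ∀ x : (EuclideanSpace ℝ (Fin p)), ⟪ζ, x⟫ = f (x, 0) := by
        intro x
        rw [hζ, InnerProductSpace.toDual_symm_apply]
        rfl
      set ρ : ℝ := f ((0 : (EuclideanSpace ℝ (Fin p))), (1 : ℝ)) with hρ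
      have hsplit : ∀ (x : (EuclideanSpace ℝ (Fin p))) (r : ℝ), f (x, r) = ⟪ζ, x⟫ + r * ρ := by
        intro x r
        have : (x, r) = (x, (0 : ℝ)) + r • ((0 : (EuclideanSpace ℝ (Fin p))), (1 : ℝ)) := by
          rw [Prod.smul_mk]
          simp
        rw [this, map_add, map_smul, hζapp, smul_eq_mul]
      have hzeroD : ((0 : (EuclideanSpace ℝ (Fin p))), (0 : ℝ)) ∈ D := by
        refine ⟨((0 : (EuclideanSpace ℝ (Fin p))), (0 : ℝ)), ⟨0, by simpa using hlam, rfl⟩, 0,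
          ⟨fun _ => 0, fun i => le_rfl, by simp⟩, by simp⟩
      have hu0 : 0 < u0 := by
        have := hfD _ hzeroD
        have h0 : f (0, 0) = 0 := map_zero f
        linarith
      -- rays of the cone are in D
      have hrayD : ∀ (r : ℝ), 0 ≤ r → ∀ i, r • v i ∈ D := by
        intro r hr i
        refine ⟨((0 : (EuclideanSpace ℝ (Fin p))), (0 : ℝ)), ⟨0, by simpa using hlam, rfl⟩,
          r • v i, ⟨fun i' => if i = i' then r else 0, ?_, ?_⟩, by simp⟩
        · intro i'
          by_cases h : i = i' <;> simp [h, hr]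
        · have : ∀ i', (if i = i' then r else 0) • v i' =
              (if i = i' then r • v i' else 0) := by
            intro i'
            by_cases h : i = i' <;> simp [h]
          rw [Finset.sum_congr rfl (fun i' _ => this i')]
          rw [Finset.sum_ite_eq]
          simp
      have hray : ∀ i, f (v i) ≤ 0 := by
        intro i
        apply ray_bound hu0
        intro r hr
        have := hfD _ (hrayD r hr i)
        rwa [map_smul, smul_eq_mul] at this
      have hCj : ∀ j, ⟪ζ, C j⟫ + e j * ρ ≤ 0 := by
        intro j
        have := hray (Sum.inl j)
        rwa [hv, Sum.elim_inl, hsplit] at this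
      have hρ0 : ρ ≤ 0 := by
        have := hray (Sum.inr ())
        rw [hv, Sum.elim_inr, hsplit] at this
        simpa using this
      -- ball bound
      have hball : lam * ‖ζ‖ < u0 := by
        by_cases hζ0 : ζ = 0
        · simp [hζ0, hu0]
        · have hu : ((lam / ‖ζ‖) • ζ, (0 : ℝ)) ∈ D := by
            refine ⟨((lam / ‖ζ‖) • ζ, (0 : ℝ)), ⟨(lam / ‖ζ‖) • ζ, ?_, rfl⟩, 0,
              ⟨fun _ => 0, fun i => le_rfl, by simp⟩, by simp⟩
            rw [Metric.mem_closedBall, dist_zero_right, norm_smul]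
            rw [Real.norm_eq_abs, abs_of_nonneg (by positivity)]
            rw [div_mul_cancel₀ _ (norm_ne_zero_iff.mpr hζ0)]
          have := hfD _ hu
          have heq : f ((lam / ‖ζ‖) • ζ, (0 : ℝ)) = lam * ‖ζ‖ := by
            have hn : ‖ζ‖ ≠ 0 := norm_ne_zero_iff.mpr hζ0
            rw [hsplit, real_inner_smul_right, real_inner_self_eq_norm_sq]
            field_simp
            ring
          rwa [heq] at this
      have hxval : u0 < ⟪ζ, a⟫ + t * ρ := by
        have := hfx
        rwa [hsplit] at this
      -- case split on ρ
      rcases eq_or_lt_of_le hρ0 with hρz | hρneg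
      · -- ρ = 0
        have hCj' : ∀ j, ⟪ζ, C j⟫ ≤ 0 := by
          intro j
          have := hCj j
          rw [hρz] at this
          simpa using this
        have ha : lam * ‖ζ‖ < ⟪ζ, a⟫ := by
          rw [hρz] at hxval
          simp only [mul_zero, add_zero] at hxval
          linarith
        set δ : ℝ := ⟪a, ζ⟫ - lam * ‖ζ‖ with hδ
        have hδ0 : 0 < δ := by
          rw [hδ, real_inner_comm]
          linarith
        set cc : ℝ := (t + 1) / δ with hcc
        have hcc0 : 0 ≤ cc := by positivity
        have := H' (cc • ζ) ?_
        · rw [real_inner_smul_right, norm_smul, Real.norm_eq_abs,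
            abs_of_nonneg hcc0] at this
          have hccδ : cc * δ = t + 1 := by
            rw [hcc, div_mul_cancel₀ _ hδ0.ne']
          rw [hδ] at hccδ
          nlinarith
        · intro j
          rw [real_inner_smul_right]
          have h1 : ⟪C j, ζ⟫ ≤ 0 := by rw [real_inner_comm]; exact hCj' j
          have := mul_nonpos_of_nonneg_of_nonpos hcc0 h1
          linarith [he0 j]
      · -- ρ < 0
        set σ : ℝ := -ρ with hσ
        have hσ0 : 0 < σ := by rw [hσ]; linarith
        have hfeas : ∀ j, ⟪C j, σ⁻¹ • ζ⟫ ≤ e j := by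
          intro j
          rw [real_inner_smul_right, real_inner_comm]
          have h1 : ⟪ζ, C j⟫ ≤ σ * e j := by
            have := hCj j
            rw [hσ]
            nlinarith [he0 j]
          rw [inv_mul_le_iff₀ hσ0]
          linarith [h1]
        have := H' (σ⁻¹ • ζ) hfeas
        rw [real_inner_smul_right, norm_smul, Real.norm_eq_abs,
          abs_of_nonneg (by positivity)] at this
        have hζa : ⟪a, ζ⟫ = ⟪ζ, a⟫ := real_inner_comm _ _
        rw [hζa] at this
        -- from hxval : u0 < ⟪ζ, a⟫ + t * ρ = ⟪ζ, a⟫ - t * σ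
        have h2 : lam * ‖ζ‖ < ⟪ζ, a⟫ - t * σ := by
          have hρσ : ρ = -σ := by rw [hσ]; ring
          rw [hρσ] at hxval
          nlinarith [hball, hxval]
        have hinv : σ * σ⁻¹ = 1 := mul_inv_cancel₀ hσ0.ne'
        have h4 := mul_le_mul_of_nonneg_left this hσ0.le
        have h5 : σ * (σ⁻¹ * ⟪ζ, a⟫ - lam * (σ⁻¹ * ‖ζ‖)) =
            (σ * σ⁻¹) * ⟪ζ, a⟫ - lam * ((σ * σ⁻¹) * ‖ζ‖) := by ring
        rw [h5, hinv, one_mul, one_mul] at h4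
        nlinarith [h4, h2, hσ0]
    -- extract γ from the membership
    obtain ⟨bb, ⟨u, hu, rfl⟩, k, ⟨c, hc, rfl⟩, hsum⟩ := hmem
    rw [hKsum] at hsum
    set γ : Fin m → ℝ := fun j => c (Sum.inl j) with hγ
    have h1 : u + ∑ j, γ j • C j = a := congrArg Prod.fst hsum
    have h2 : 0 + ((∑ j, γ j * e j) + c (Sum.inr ())) = t := congrArg Prod.snd hsum
    refine ⟨γ, fun j => hc _, ?_, ?_⟩
    · have : ∑ j, γ j * e j ≤ t := by
        rw [zero_add] at h2
        have := hc (Sum.inr ())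
        linarith
      rw [ht] at this
      have heq : ∑ j, γ j * (d j - ⟪C j, ξhat⟫) = ∑ j, γ j * e j := rfl
      rw [heq]
      linarith
    · have : (∑ j, γ j • C j) - a = -u := by
        rw [← h1]; abel
      rw [this, norm_neg]
      rwa [Metric.mem_closedBall, dist_zero_right] at hu
  · -- easy direction
    rintro ⟨γ, hγ, hs1, hs2⟩ ξ hξ
    set g : (EuclideanSpace ℝ (Fin p)) := ∑ j, γ j • C j with hg
    set z : (EuclideanSpace ℝ (Fin p)) := ξ - ξhat with hz
    have key1 : ⟪a, ξ⟫ = ⟪a, ξhat⟫ + ⟪a, z⟫ := by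
      rw [hz, inner_sub_right]; ring
    have key2 : ⟪g, z⟫ ≤ ∑ j, γ j * e j := by
      rw [hg, sum_inner]
      apply Finset.sum_le_sum
      intro j _
      rw [real_inner_smul_left]
      apply mul_le_mul_of_nonneg_left _ (hγ j)
      show ⟪C j, z⟫ ≤ d j - ⟪C j, ξhat⟫
      rw [hz, inner_sub_right]
      have := hξ j
      linarith
    have key3 : ⟪a, z⟫ - ⟪g, z⟫ ≤ lam * ‖z‖ := by
      have h1 : ⟪a, z⟫ - ⟪g, z⟫ = -⟪g - a, z⟫ := by
        rw [inner_sub_left]; ring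
      rw [h1]
      have h2 := abs_real_inner_le_norm (g - a) z
      have h3 : ‖g - a‖ * ‖z‖ ≤ lam * ‖z‖ :=
        mul_le_mul_of_nonneg_right hs2 (norm_nonneg _)
      have := neg_abs_le ⟪g - a, z⟫
      linarith
    have heq : ∑ j, γ j * (d j - ⟪C j, ξhat⟫) = ∑ j, γ j * e j := rfl
    rw [heq] at hs1
    calc ⟪a, ξ⟫ + b - lam * ‖ξ - ξhat‖
        = ⟪a, ξhat⟫ + ⟪a, z⟫ + b - lam * ‖z‖ := by rw [key1, hz]
      _ ≤ ⟪a, ξhat⟫ + (⟪g, z⟫ + lam * ‖z‖) + b - lam * ‖z‖ := by linarith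
      _ ≤ ⟪a, ξhat⟫ + (∑ j, γ j * e j + lam * ‖z‖) + b - lam * ‖z‖ := by linarith
      _ ≤ s := by linarith
end
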